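/- arXiv:1812.08702 — 3 statements merged into one kernel-verified Lean document; each statement's English description precedes it below -/
import Mathlib

section
/- The 2-dissection identity 1/(q;q)_∞^2 = (q^8;q^8)_∞^5 / ((q^2;q^2)_∞^5 (q^{16};q^{16})_∞^2) + 2q (q^4;q^4)_∞^2 (q^{16};q^{16})_∞^2 / ((q^2;q^2)_∞^5 (q^8;q^8)_∞) holds as formal power series. -/
open PowerSeries Finset

/-- `(q^a; q^c)_∞ = ∏_{i ≥ 0} (1 - q^{a + c·i})` as a formal power series in `q = X`
(for `a ≥ 1`, the `n`-th coefficient only depends on the first `n+1` factors). -/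
noncomputable def qp (a c : ℕ) : PowerSeries ℚ :=
  PowerSeries.mk fun n =>
    PowerSeries.coeff n
      (∏ i ∈ Finset.range (n + 1), (1 - (PowerSeries.X : PowerSeries ℚ) ^ (a + c * i)))

namespace TwoDissect

/-- Congruence mod `X^d` : the first `d` coefficients agree. -/
def Cg (d : ℕ) (f g : PowerSeries ℚ) : Prop := (X : PowerSeries ℚ) ^ d ∣ (f - g)

lemma cg_iff {d : ℕ} {f g : PowerSeries ℚ} :
    Cg d f g ↔ ∀ m < d, coeff m f = coeff m g := by
  unfold Cg
  rw [PowerSeries.X_pow_dvd_iff]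
  simp [sub_eq_zero]

lemma Cg.refl {d : ℕ} (f : PowerSeries ℚ) : Cg d f f := by simp [Cg]

lemma Cg.symm {d : ℕ} {f g : PowerSeries ℚ} (h : Cg d f g) : Cg d g f := by
  unfold Cg at h ⊢
  rw [← neg_sub f g]
  exact h.neg_right

lemma Cg.trans {d : ℕ} {f g h : PowerSeries ℚ} (h1 : Cg d f g) (h2 : Cg d g h) :
    Cg d f h := by
  have := dvd_add h1 h2
  simpa [Cg] using this

lemma Cg.add {d : ℕ} {f g f' g' : PowerSeries ℚ} (h1 : Cg d f f') (h2 : Cg d g g') :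
    Cg d (f + g) (f' + g') := by
  have := dvd_add h1 h2
  simpa [Cg, sub_add_sub_comm] using this

lemma Cg.mul {d : ℕ} {f g f' g' : PowerSeries ℚ} (h1 : Cg d f f') (h2 : Cg d g g') :
    Cg d (f * g) (f' * g') := by
  have : f * g - f' * g' = f * (g - g') + (f - f') * g' := by ring
  unfold Cg
  rw [this]
  exact dvd_add (Dvd.dvd.mul_left h2 f) (Dvd.dvd.mul_right h1 g')

lemma Cg.pow {d : ℕ} {f f' : PowerSeries ℚ} (h : Cg d f f') (n : ℕ) :
    Cg d (f ^ n) (f' ^ n) := by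
  induction n with
  | zero => simpa using Cg.refl 1
  | succ n ih => rw [pow_succ, pow_succ]; exact ih.mul h

lemma Cg.prod {d : ℕ} {ι : Type*} (s : Finset ι) (f g : ι → PowerSeries ℚ)
    (h : ∀ i ∈ s, Cg d (f i) (g i)) : Cg d (∏ i ∈ s, f i) (∏ i ∈ s, g i) := by
  classical
  induction s using Finset.cons_induction with
  | empty => simpa using Cg.refl 1
  | cons a s ha ih =>
      rw [Finset.prod_cons, Finset.prod_cons]
      exact (h a (Finset.mem_cons_self a s)).mul
        (ih fun i hi => h i (Finset.mem_cons_of_mem hi))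

lemma Cg.sum {d : ℕ} {ι : Type*} (s : Finset ι) (f g : ι → PowerSeries ℚ)
    (h : ∀ i ∈ s, Cg d (f i) (g i)) : Cg d (∑ i ∈ s, f i) (∑ i ∈ s, g i) := by
  classical
  induction s using Finset.cons_induction with
  | empty => simpa using Cg.refl 0
  | cons a s ha ih =>
      rw [Finset.sum_cons, Finset.sum_cons]
      exact (h a (Finset.mem_cons_self a s)).add
        (ih fun i hi => h i (Finset.mem_cons_of_mem hi))

lemma cg_one_sub {d e : ℕ} (he : d ≤ e) : Cg d (1 - X ^ e : PowerSeries ℚ) 1 := by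
  unfold Cg
  simpa using (pow_dvd_pow (X : PowerSeries ℚ) he).neg_right

lemma cg_one_add {d e : ℕ} (he : d ≤ e) : Cg d (1 + X ^ e : PowerSeries ℚ) 1 := by
  unfold Cg
  simpa using (pow_dvd_pow (X : PowerSeries ℚ) he)

lemma eq_of_forall_cg {f g : PowerSeries ℚ} (h : ∀ d, Cg d f g) : f = g := by
  ext n
  exact (cg_iff.mp (h (n + 1))) n (Nat.lt_succ_self n)

lemma coeff_eq_of_cg {d : ℕ} {f g : PowerSeries ℚ} (h : Cg (d+1) f g) :
    coeff d f = coeff d g := (cg_iff.mp h) d (Nat.lt_succ_self d)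

lemma qp_cg {a c d N : ℕ} (ha : 1 ≤ a) (hc : 1 ≤ c) (hN : d ≤ N) :
    Cg d (qp a c) (∏ i ∈ range N, (1 - (X : PowerSeries ℚ) ^ (a + c * i))) := by
  rw [cg_iff]
  intro m hm
  have hqp : coeff m (qp a c)
      = coeff m (∏ i ∈ range (m + 1), (1 - (X : PowerSeries ℚ) ^ (a + c * i))) := by
    simp [qp]
  rw [hqp]
  obtain ⟨K, hK⟩ : ∃ K, N = (m + 1) + K := ⟨N - (m+1), by omega⟩
  subst hK
  conv_rhs => rw [Finset.prod_range_add]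
  have htail : Cg (m+1) (∏ i ∈ range K,
      (1 - (X : PowerSeries ℚ) ^ (a + c * (m + 1 + i)))) 1 := by
    have := Cg.prod (d := m+1) (range K)
      (fun i => 1 - (X : PowerSeries ℚ) ^ (a + c * (m + 1 + i))) (fun _ => 1)
      (fun i _ => cg_one_sub (by nlinarith))
    simpa using this
  have := (Cg.refl (d := m+1)
      (∏ i ∈ range (m+1), (1 - (X : PowerSeries ℚ) ^ (a + c * i)))).mul htail
  rw [mul_one] at this
  exact (coeff_eq_of_cg this).symm

lemma qp_const (a c : ℕ) (ha : 1 ≤ a) : constantCoeff (qp a c) = 1 := by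
  have : constantCoeff (qp a c) = coeff 0 (qp a c) := by
    simp [coeff_zero_eq_constantCoeff]
  rw [this]
  have : coeff 0 (qp a c)
      = coeff 0 (∏ i ∈ range 1, (1 - (X : PowerSeries ℚ) ^ (a + c * i))) := by
    simp [qp]
  rw [this]
  simp [Finset.prod_range_one]
  intro h
  omega

/-- Gaussian binomial `[M choose r]` in base `X²`, as a polynomial. -/
noncomputable def qb : ℕ → ℕ → Polynomial ℚ
  | 0, 0 => 1
  | 0, _+1 => 0
  | _+1, 0 => 1
  | M+1, r+1 => qb M (r+1) + Polynomial.X ^ (2*(M-r)) * qb M r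

lemma qb_zero (M : ℕ) : qb M 0 = 1 := by cases M <;> rfl

lemma qb_succ (M r : ℕ) :
    qb (M+1) (r+1) = qb M (r+1) + Polynomial.X ^ (2*(M-r)) * qb M r := rfl

lemma qb_gt : ∀ M r : ℕ, M < r → qb M r = 0 := by
  intro M
  induction M with
  | zero => intro r hr; match r, hr with | r+1, _ => rfl
  | succ M ih =>
      intro r hr
      match r, hr with
      | r+1, hr =>
        rw [qb_succ, ih (r+1) (by omega), ih r (by omega)]
        ring

lemma qb_self : ∀ M : ℕ, qb M M = 1 := by
  intro M
  induction M with
  | zero => rfl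
  | succ M ih => rw [qb_succ, qb_gt M (M+1) (by omega), ih]; simp

lemma qb_rat : ∀ M r : ℕ, r ≤ M →
    (1 - Polynomial.X ^ (2*(r+1))) * qb M (r+1)
      = (1 - Polynomial.X ^ (2*(M-r))) * qb M r := by
  intro M
  induction M with
  | zero =>
      intro r hr
      interval_cases r
      rw [qb_gt 0 1 (by omega)]
      simp
  | succ M ih =>
      intro r hr
      rcases Nat.eq_zero_or_pos r with h0 | hpos
      · subst h0
        have h1 := ih 0 (Nat.zero_le M)
        rw [qb_zero, mul_one] at h1
        have e0 : M - 0 = M := by omega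
        rw [e0] at h1
        have e1 : M + 1 - 0 = M + 1 := by omega
        rw [qb_succ, qb_zero, qb_zero, e0, e1, mul_one]
        have hx : (Polynomial.X : Polynomial ℚ) ^ (2*(M+1))
            = Polynomial.X ^ (2*1) * Polynomial.X ^ (2*M) := by
          rw [← pow_add]; congr 1; omega
        rw [hx]
        linear_combination h1
      · obtain ⟨s, rfl⟩ : ∃ s, r = s + 1 := ⟨r - 1, by omega⟩
        rcases Nat.lt_or_ge s M with hsM | hsM
        · have ih1 := ih (s+1) (by omega)
          have ih2 := ih s (by omega)
          have e2 : M - (s+1) = M - s - 1 := by omega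
          have e3 : M + 1 - (s+1) = M - s := by omega
          rw [e2] at ih1
          rw [qb_succ M (s+1), qb_succ M s, e2, e3]
          have hx1 : (Polynomial.X : Polynomial ℚ) ^ (2*(M-s-1)) * Polynomial.X ^ (2*(s+1+1))
              = Polynomial.X ^ (2*(M+1)) := by rw [← pow_add]; congr 1; omega
          have hx2 : (Polynomial.X : Polynomial ℚ) ^ (2*(M-s)) * Polynomial.X ^ (2*(s+1))
              = Polynomial.X ^ (2*(M+1)) := by rw [← pow_add]; congr 1; omega
          linear_combination ih1 + Polynomial.X^(2*(M-s))*ih2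
            - qb M (s+1)*hx1 + qb M (s+1)*hx2
        · have hs : s = M := by omega
          subst hs
          rw [qb_gt (s+1) (s+1+1) (by omega)]
          have : s + 1 - (s + 1) = 0 := by omega
          rw [this]
          simp

lemma qb_pascalB (M r : ℕ) :
    qb (M+1) (r+1) = Polynomial.X ^ (2*(r+1)) * qb M (r+1) + qb M r := by
  rcases Nat.lt_or_ge M r with h | h
  · rw [qb_gt (M+1) (r+1) (by omega), qb_gt M (r+1) (by omega), qb_gt M r (by omega)]
    ring
  · have h1 := qb_rat M r h
    rw [qb_succ]
    linear_combination h1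

/-- `(Q;Q)_k` with `Q = X²`. -/
noncomputable def QQ (k : ℕ) : Polynomial ℚ :=
  ∏ i ∈ Finset.range k, (1 - Polynomial.X ^ (2*(i+1)))

lemma QQ_succ (k : ℕ) : QQ (k+1) = QQ k * (1 - Polynomial.X ^ (2*(k+1))) := by
  rw [QQ, QQ, Finset.prod_range_succ]

lemma qb_prod : ∀ M r : ℕ, r ≤ M → QQ r * QQ (M - r) * qb M r = QQ M := by
  intro M
  induction M with
  | zero => intro r hr; interval_cases r; simp [QQ, qb_zero]
  | succ M ih =>
      intro r hr
      rcases Nat.eq_zero_or_pos r with h0 | hpos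
      · subst h0; simp [QQ, qb_zero]
      · obtain ⟨s, rfl⟩ : ∃ s, r = s + 1 := ⟨r - 1, by omega⟩
        rcases Nat.lt_or_ge s M with hsM | hsM
        · have ih1 := ih (s+1) (by omega)
          have ih2 := ih s (by omega)
          have e2 : M - s = (M - s - 1) + 1 := by omega
          have e3 : M - (s+1) = M - s - 1 := by omega
          have e4 : M + 1 - (s + 1) = M - s := by omega
          have h4 : QQ (M+1) = QQ M * (1 - Polynomial.X ^ (2*(M+1))) := QQ_succ M
          have h5 : QQ (M-s) = QQ (M-(s+1)) * (1 - Polynomial.X ^ (2*(M-s))) := by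
            conv_lhs => rw [e2]
            rw [QQ_succ, e3, ← e2]
          have h6 : QQ (s+1) = QQ s * (1 - Polynomial.X ^ (2*(s+1))) := QQ_succ s
          have hx : (Polynomial.X : Polynomial ℚ) ^ (2*(M-s)) * Polynomial.X ^ (2*(s+1))
              = Polynomial.X ^ (2*(M+1)) := by rw [← pow_add]; congr 1; omega
          rw [h6] at ih1
          rw [h5] at ih2
          rw [qb_succ M s, e4, h5, h6, h4]
          linear_combination (1 - Polynomial.X^(2*(M-s)))*ih1
            + Polynomial.X^(2*(M-s))*(1 - Polynomial.X^(2*(s+1)))*ih2 - QQ M * hx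
        · have hs : s = M := by omega
          subst hs
          have : s + 1 - (s + 1) = 0 := by omega
          rw [this, qb_self]
          simp [QQ]

/-- `(j - n)²` as a natural number. -/
def en (j n : ℕ) : ℕ := j*j + n*n - 2*(j*n)

lemma en_int (j n : ℕ) : (en j n : ℤ) = ((j:ℤ) - n)^2 := by
  unfold en
  have h : 2*(j*n) ≤ j*j + n*n := by
    rcases le_total j n with h | h
    · obtain ⟨k, rfl⟩ := Nat.exists_eq_add_of_le h; nlinarith
    · obtain ⟨k, rfl⟩ := Nat.exists_eq_add_of_le h; nlinarith
  push_cast [h]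
  ring

lemma en_zero (n : ℕ) : en 0 n = n*n := by
  have : (en 0 n : ℤ) = ((n:ℤ)*n) := by rw [en_int]; push_cast; ring
  exact_mod_cast this

lemma en1 (j n : ℕ) : en j (n+1) + 2*j = en j n + (2*n+1) := by
  have : ((en j (n+1) + 2*j : ℕ) : ℤ) = ((en j n + (2*n+1) : ℕ) : ℤ) := by
    push_cast [en_int]; ring
  exact_mod_cast this

lemma en2 (j n : ℕ) : en (j+1) (n+1) = en j n := by
  have : ((en (j+1) (n+1) : ℕ) : ℤ) = ((en j n : ℕ) : ℤ) := by
    push_cast [en_int]; ring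
  exact_mod_cast this

lemma en3 (j m n : ℕ) (hj : j ≤ m + n) :
    en (j+1) n + 2*(m+n-j) = en j n + (2*m+1) := by
  have : ((en (j+1) n + 2*(m+n-j) : ℕ) : ℤ) = ((en j n + (2*m+1) : ℕ) : ℤ) := by
    push_cast [en_int, hj]
    ring
  exact_mod_cast this

/-- The theta side of finite JTP: `∑_j X^{(j-n)²} [m+n choose j] z^j`. -/
noncomputable def Rmn (m n : ℕ) : Polynomial (Polynomial ℚ) :=
  ∑ j ∈ range (m+n+1),
    Polynomial.C (Polynomial.X ^ (en j n) * qb (m+n) j) * Polynomial.X ^ j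

lemma sum_shift (m n : ℕ) :
    ∑ j ∈ range (m+n+1),
      (Polynomial.C (Polynomial.X ^ (en (j+1) n) * qb (m+n) (j+1)) * Polynomial.X ^ (j+1))
    = Rmn m n - Polynomial.C (Polynomial.X ^ (en 0 n) * qb (m+n) 0) := by
  rw [Finset.sum_range_succ]
  rw [qb_gt (m+n) (m+n+1) (by omega)]
  rw [Rmn, Finset.sum_range_succ']
  simp

lemma rec_m (m n : ℕ) :
    Rmn (m+1) n = (1 + Polynomial.C (Polynomial.X ^ (2*m+1)) * Polynomial.X) * Rmn m n := by
  have expand : Rmn (m+1) n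
      = ∑ j ∈ range (m+n+1),
          (Polynomial.C (Polynomial.X ^ (en (j+1) n) * qb (m+n) (j+1)) * Polynomial.X ^ (j+1))
        + ∑ j ∈ range (m+n+1),
          (Polynomial.C (Polynomial.X ^ (en (j+1) n + 2*((m+n)-j)) * qb (m+n) j)
              * Polynomial.X ^ (j+1))
        + Polynomial.C (Polynomial.X ^ (en 0 n) * qb (m+n) 0) := by
    rw [Rmn]
    have : m + 1 + n + 1 = (m + n + 1) + 1 := by omega
    rw [this, Finset.sum_range_succ']
    have hmn : m + 1 + n = m + n + 1 := by omega
    rw [hmn]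
    rw [← Finset.sum_add_distrib]
    congr 1
    · apply Finset.sum_congr rfl
      intro j hj
      rw [qb_succ (m+n) j]
      rw [mul_add, map_add, add_mul, pow_add]
      ring
    · simp [qb_zero]
  rw [expand, sum_shift]
  have h2 : ∑ j ∈ range (m+n+1),
      (Polynomial.C (Polynomial.X ^ (en (j+1) n + 2*((m+n)-j)) * qb (m+n) j)
          * Polynomial.X ^ (j+1))
      = Polynomial.C (Polynomial.X ^ (2*m+1)) * Polynomial.X * Rmn m n := by
    rw [Rmn, Finset.mul_sum]
    apply Finset.sum_congr rfl
    intro j hj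
    rw [Finset.mem_range] at hj
    rw [en3 j m n (by omega)]
    simp only [pow_add, pow_succ, pow_zero, map_mul, map_pow]
    ring
  rw [h2]
  ring

lemma rec_n (m n : ℕ) :
    Rmn m (n+1) = (Polynomial.X + Polynomial.C (Polynomial.X ^ (2*n+1))) * Rmn m n := by
  have expand : Rmn m (n+1)
      = Polynomial.C (Polynomial.X ^ (2*n+1)) *
          (∑ j ∈ range (m+n+1),
            (Polynomial.C (Polynomial.X ^ (en (j+1) n) * qb (m+n) (j+1)) * Polynomial.X ^ (j+1)))
        + Polynomial.X * Rmn m n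
        + Polynomial.C (Polynomial.X ^ (en 0 (n+1)) * qb (m+n) 0) := by
    rw [Rmn]
    have : m + (n + 1) + 1 = (m + n + 1) + 1 := by omega
    rw [this, Finset.sum_range_succ']
    have hmn : m + (n + 1) = m + n + 1 := by omega
    rw [hmn]
    congr 1
    · rw [Finset.mul_sum, Rmn, Finset.mul_sum, ← Finset.sum_add_distrib]
      apply Finset.sum_congr rfl
      intro j hj
      rw [qb_pascalB (m+n) j]
      have hexp : en (j+1) (n+1) + 2*(j+1) = en (j+1) n + (2*n+1) := en1 (j+1) n
      have key : Polynomial.C (Polynomial.X ^ (en (j+1) (n+1)) *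
          (Polynomial.X ^ (2*(j+1)) * qb (m+n) (j+1) + qb (m+n) j)) * Polynomial.X ^ (j+1)
          = Polynomial.C (Polynomial.X ^ (en (j+1) (n+1) + 2*(j+1)) * qb (m+n) (j+1))
              * Polynomial.X ^ (j+1)
            + Polynomial.C (Polynomial.X ^ (en (j+1) (n+1)) * qb (m+n) j) * Polynomial.X ^ (j+1) := by
        rw [mul_add, map_add, pow_add]
        simp only [map_mul, map_pow]
        ring
      rw [key, hexp, en2 j n]
      simp only [pow_add, pow_succ, pow_zero, map_mul, map_pow]
      ring
    · simp [qb_zero]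
  rw [expand, sum_shift]
  rw [qb_zero, en_zero, en_zero]
  have hsq : (n+1)*(n+1) = n*n + (2*n+1) := by ring
  rw [hsq]
  simp only [pow_add, pow_succ, pow_zero, map_mul, map_pow]
  ring

lemma Rmn_zero : Rmn 0 0 = 1 := by
  rw [Rmn]
  simp [en, qb_zero]

theorem jtp (m n : ℕ) :
    (∏ i ∈ range m, (1 + Polynomial.C (Polynomial.X ^ (2*i+1)) * Polynomial.X)) *
    (∏ i ∈ range n, (Polynomial.X + Polynomial.C (Polynomial.X ^ (2*i+1))))
      = Rmn m n := by
  induction m with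
  | zero =>
      simp only [Finset.range_zero, Finset.prod_empty, one_mul]
      induction n with
      | zero => simpa using Rmn_zero.symm
      | succ n ihn =>
          rw [Finset.prod_range_succ, rec_n, mul_comm _ (Polynomial.X + _), ihn]
  | succ m ihm =>
      rw [Finset.prod_range_succ, rec_m, ← ihm]
      ring

lemma Cg.mono {d d' : ℕ} {f g : PowerSeries ℚ} (h : Cg d f g) (hd : d' ≤ d) :
    Cg d' f g := dvd_trans (pow_dvd_pow _ hd) h

lemma cg_mul_Xpow {d e : ℕ} {f g : PowerSeries ℚ} (h : Cg d f g) :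
    Cg (e + d) ((X:PowerSeries ℚ)^e * f) ((X:PowerSeries ℚ)^e * g) := by
  obtain ⟨c, hc⟩ := h
  exact ⟨c, by rw [pow_add, mul_assoc, ← hc]; ring⟩

lemma cg_cancel_Xpow {d e : ℕ} {f g : PowerSeries ℚ}
    (h : Cg (e + d) ((X:PowerSeries ℚ)^e * f) ((X:PowerSeries ℚ)^e * g)) : Cg d f g := by
  obtain ⟨c, hc⟩ := h
  refine ⟨c, ?_⟩
  have hX : (X:PowerSeries ℚ)^e ≠ 0 := pow_ne_zero _ X_ne_zero
  apply mul_left_cancel₀ hX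
  rw [← mul_sub] at hc
  rw [hc, pow_add]
  ring

/-- theta series `∑_{k ∈ ℤ} q^{u k² + v k}`. -/
noncomputable def th (u v : ℕ) : PowerSeries ℚ :=
  PowerSeries.mk fun n =>
    ((((Finset.Icc (-(n:ℤ)-1) ((n:ℤ)+1))).filter
      (fun k => (u:ℤ)*k^2 + (v:ℤ)*k = (n:ℤ))).card : ℚ)

lemma th_abs_le {u v : ℕ} (hu : 1 ≤ u) (hv : v < u) {k : ℤ} {n : ℕ}
    (h : (u:ℤ)*k^2 + (v:ℤ)*k = (n:ℤ)) : -(n:ℤ) ≤ k ∧ k ≤ (n:ℤ) := by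
  have hu' : (1:ℤ) ≤ (u:ℤ) := by exact_mod_cast hu
  have hv0 : (0:ℤ) ≤ (v:ℤ) := by positivity
  have hvu : (v:ℤ) < (u:ℤ) := by exact_mod_cast hv
  rcases le_or_gt 0 k with hk | hk
  · constructor
    · have : (0:ℤ) ≤ (n:ℤ) := by positivity
      omega
    · have h1 : k ≤ k^2 := by nlinarith
      have h2 : (k:ℤ)^2 ≤ (u:ℤ)*k^2 := by nlinarith [sq_nonneg k]
      have h3 : (0:ℤ) ≤ (v:ℤ)*k := mul_nonneg hv0 hk
      linarith
  · constructor
    · have h1 : (u:ℤ)*k ≤ 0 := by nlinarith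
      have h2 : k + 1 ≤ 0 := by omega
      have h3 : 0 ≤ ((u:ℤ)*k) * (k+1) := mul_nonneg_of_nonpos_of_nonpos h1 h2
      have h4 : ((v:ℤ)+1)*k ≥ (u:ℤ)*k := by nlinarith
      nlinarith
    · have : (0:ℤ) ≤ (n:ℤ) := by positivity
      omega

lemma th_e_nonneg {u v : ℕ} (hv : v < u) (k : ℤ) : 0 ≤ (u:ℤ)*k^2 + (v:ℤ)*k := by
  have hv0 : (0:ℤ) ≤ (v:ℤ) := by positivity
  have hvu : (v:ℤ) < (u:ℤ) := by exact_mod_cast hv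
  rcases le_or_gt 0 k with hk | hk
  · positivity
  · have h1 : (u:ℤ)*k + v < 0 := by nlinarith
    nlinarith [mul_pos_of_neg_of_neg hk h1]

lemma th_coeff {u v : ℕ} (hu : 1 ≤ u) (hv : v < u) (n M : ℕ) (hM : n + 1 ≤ M) :
    coeff n (th u v) =
      ((((Finset.Icc (-(M:ℤ)) (M:ℤ))).filter
        (fun k => (u:ℤ)*k^2 + (v:ℤ)*k = (n:ℤ))).card : ℚ) := by
  rw [th, coeff_mk]
  congr 2
  apply Finset.ext
  intro k
  simp only [Finset.mem_filter, Finset.mem_Icc]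
  constructor
  · rintro ⟨⟨h1, h2⟩, h3⟩
    have hb := th_abs_le hu hv h3
    exact ⟨⟨by omega, by omega⟩, h3⟩
  · rintro ⟨⟨h1, h2⟩, h3⟩
    have hb := th_abs_le hu hv h3
    exact ⟨⟨by omega, by omega⟩, h3⟩

/-- Tail product `∏_{i ∈ [a,b)} (1 - X^{2(i+1)})` in `Polynomial ℚ`. -/
noncomputable def tl (a b : ℕ) : Polynomial ℚ :=
  ∏ i ∈ Finset.Ico a b, (1 - Polynomial.X ^ (2*(i+1)))

lemma QQ_eq_tl (k : ℕ) : QQ k = tl 0 k := by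
  rw [QQ, tl, Finset.range_eq_Ico]

lemma tl_mul {a b c : ℕ} (h1 : a ≤ b) (h2 : b ≤ c) : tl a b * tl b c = tl a c :=
  Finset.prod_Ico_consecutive _ h1 h2

lemma QQ_ne_zero (k : ℕ) : QQ k ≠ 0 := by
  intro h
  have := congrArg (Polynomial.eval 0) h
  rw [QQ, Polynomial.eval_prod] at this
  simp at this

lemma qb_tails (M j : ℕ) (hj : j ≤ M) :
    qb M j * QQ M = tl j M * tl (M-j) M := by
  have h1 := qb_prod M j hj
  have h2 : QQ M = QQ j * tl j M := by
    rw [QQ_eq_tl, QQ_eq_tl, tl_mul (Nat.zero_le j) hj]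
  have h3 : QQ M = QQ (M-j) * tl (M-j) M := by
    rw [QQ_eq_tl, QQ_eq_tl, tl_mul (Nat.zero_le (M-j)) (by omega)]
  have hne : QQ j * QQ (M-j) ≠ 0 := mul_ne_zero (QQ_ne_zero j) (QQ_ne_zero (M-j))
  apply mul_left_cancel₀ hne
  calc QQ j * QQ (M-j) * (qb M j * QQ M)
      = (QQ j * QQ (M-j) * qb M j) * QQ M := by ring
    _ = QQ M * QQ M := by rw [h1]
    _ = (QQ j * tl j M) * (QQ (M-j) * tl (M-j) M) := by rw [← h2, ← h3]
    _ = QQ j * QQ (M-j) * (tl j M * tl (M-j) M) := by ring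

/-- Substitution `q ↦ X^u` from `Polynomial ℚ` to `PowerSeries ℚ`. -/
noncomputable def Phi (u : ℕ) : Polynomial ℚ →+* PowerSeries ℚ :=
  Polynomial.eval₂RingHom (PowerSeries.C) ((X:PowerSeries ℚ)^u)

/-- Substitution `z ↦ X^v`, `q ↦ X^u`. -/
noncomputable def Psi (u v : ℕ) : Polynomial (Polynomial ℚ) →+* PowerSeries ℚ :=
  Polynomial.eval₂RingHom (Phi u) ((X:PowerSeries ℚ)^v)

lemma Phi_X (u : ℕ) : Phi u Polynomial.X = (X:PowerSeries ℚ)^u := by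
  simp [Phi]

lemma Phi_Xpow (u k : ℕ) : Phi u (Polynomial.X ^ k) = (X:PowerSeries ℚ)^(u*k) := by
  rw [map_pow, Phi_X, ← pow_mul]

lemma Psi_X (u v : ℕ) : Psi u v Polynomial.X = (X:PowerSeries ℚ)^v := by
  simp [Psi]

lemma Psi_C (u v : ℕ) (p : Polynomial ℚ) : Psi u v (Polynomial.C p) = Phi u p := by
  simp [Psi]

/-- power series tail product with scale `u`. -/
noncomputable def ptl (u a b : ℕ) : PowerSeries ℚ :=
  ∏ i ∈ Finset.Ico a b, (1 - (X:PowerSeries ℚ)^(2*u*(i+1)))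

lemma Phi_tl (u a b : ℕ) : Phi u (tl a b) = ptl u a b := by
  rw [tl, ptl, map_prod]
  apply Finset.prod_congr rfl
  intro i _
  rw [map_sub, map_one, Phi_Xpow]
  congr 2
  ring

lemma ptl_cg_one {u a b D : ℕ} (hD : D ≤ 2*u*(a+1)) : Cg D (ptl u a b) 1 := by
  have : Cg D (ptl u a b) (∏ i ∈ Finset.Ico a b, 1) := by
    apply Cg.prod
    intro i hi
    rw [Finset.mem_Ico] at hi
    exact cg_one_sub (le_trans hD (by nlinarith [hi.1]))
  simpa using this

lemma keyZ (u c d N w : ℤ) (hu : 1 ≤ u) (hc1 : c ≤ u - 1) (hc2 : -(u-1) ≤ c)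
    (hN : d + 1 ≤ N) (hw : -N ≤ w) (hd : 0 ≤ d) :
    d + 1 ≤ u*w^2 + c*w + 2*u*w + 2*u*N + 2*u := by
  rcases le_or_gt 0 w with hw0 | hw0
  · have h0 : 0 ≤ w*(w-1) := by
      rcases le_or_gt 1 w with h | h
      · nlinarith
      · have : w = 0 := by omega
        simp [this]
    have h1 : 0 ≤ u*(w*(w-1)) := mul_nonneg (by omega) h0
    have h2 : -((u-1)*w) ≤ c*w := by nlinarith
    have h3 : 0 ≤ (u-1)*N := by nlinarith
    nlinarith
  · have hww : w = -(-w) := by ring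
    set s : ℤ := -w with hs
    have hs1 : 1 ≤ s := by omega
    have hsN : s ≤ N := by omega
    have h0 : 0 ≤ s*(s-1) := mul_nonneg (by omega) (by omega)
    have hB : s*(s-1) ≤ u*(s*(s-1)) := by nlinarith
    have hC : 2*(N-s) ≤ 2*(u*(N-s)) := by nlinarith
    have h2 : -((u-1)*s) ≤ c*w := by nlinarith
    have hw2 : u*w^2 = u*s^2 := by rw [hs]; ring
    have huw : 2*u*w = -(2*u*s) := by rw [hs]; ring
    nlinarith [sq_nonneg (s-1)]

lemma key1 (u v d N j : ℕ) (hu : 1 ≤ u) (hv : v < u) (hN : d+1 ≤ N) (hj : j ≤ N+N) :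
    v*N + (d+1) ≤ u * en j N + v*j + 2*u*(j+1) := by
  have hvu : (v:ℤ) < (u:ℤ) := by exact_mod_cast hv
  have hv0 : (0:ℤ) ≤ (v:ℤ) := by positivity
  have hZ := keyZ (u:ℤ) (v:ℤ) (d:ℤ) (N:ℤ) ((j:ℤ) - N) (by exact_mod_cast hu)
    (by omega) (by omega) (by exact_mod_cast hN) (by omega) (by positivity)
  have hen := en_int j N
  zify
  rw [hen]
  nlinarith [hZ]

lemma key2 (u v d N j : ℕ) (hu : 1 ≤ u) (hv : v < u) (hN : d+1 ≤ N) (hj : j ≤ N+N) :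
    v*N + (d+1) ≤ u * en j N + v*j + 2*u*((N+N-j)+1) := by
  have hvu : (v:ℤ) < (u:ℤ) := by exact_mod_cast hv
  have hv0 : (0:ℤ) ≤ (v:ℤ) := by positivity
  have hZ := keyZ (u:ℤ) (-(v:ℤ)) (d:ℤ) (N:ℤ) ((N:ℤ) - j) (by exact_mod_cast hu)
    (by omega) (by omega) (by exact_mod_cast hN) (by omega) (by positivity)
  have hen := en_int j N
  zify [hj]
  rw [hen]
  have hsq : ((j:ℤ)-N)^2 = ((N:ℤ)-j)^2 := by ring
  nlinarith [hZ, hsq]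

lemma th_cg_SZ (u v d N : ℕ) (hu : 1 ≤ u) (hv : v < u) (hN : d+1 ≤ N) :
    Cg (d+1) (th u v)
      (∑ k ∈ Finset.Icc (-(N:ℤ)) (N:ℤ),
        (X:PowerSeries ℚ)^(((u:ℤ)*k^2+(v:ℤ)*k).toNat)) := by
  rw [cg_iff]
  intro m hm
  rw [th_coeff hu hv m N (by omega)]
  rw [map_sum]
  simp only [coeff_X_pow]
  rw [Finset.sum_boole]
  norm_cast
  congr 1
  apply Finset.ext
  intro k
  simp only [Finset.mem_filter, Finset.mem_Icc]
  have h0 := th_e_nonneg hv k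
  constructor
  · rintro ⟨h1, h2⟩; exact ⟨h1, by omega⟩
  · rintro ⟨h1, h2⟩; exact ⟨h1, by omega⟩

lemma reindex (u v N : ℕ) (hv : v < u) :
    (X:PowerSeries ℚ)^(v*N) * (∑ k ∈ Finset.Icc (-(N:ℤ)) (N:ℤ),
        (X:PowerSeries ℚ)^(((u:ℤ)*k^2+(v:ℤ)*k).toNat))
      = ∑ j ∈ range (N+N+1), (X:PowerSeries ℚ)^(u * en j N + v*j) := by
  rw [Finset.mul_sum]
  refine Finset.sum_nbij' (i := fun k => (k + (N:ℤ)).toNat)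
    (j := fun j => (j:ℤ) - (N:ℤ)) ?_ ?_ ?_ ?_ ?_
  · intro k hk
    rw [Finset.mem_Icc] at hk
    rw [Finset.mem_range]
    omega
  · intro j hj
    rw [Finset.mem_range] at hj
    rw [Finset.mem_Icc]
    omega
  · intro k hk
    rw [Finset.mem_Icc] at hk
    omega
  · intro j hj
    rw [Finset.mem_range] at hj
    omega
  · intro k hk
    rw [Finset.mem_Icc] at hk
    rw [← pow_add]
    congr 1
    have h0 := th_e_nonneg hv k
    have hcast : (((k + (N:ℤ)).toNat) : ℤ) = k + N := by omega
    have : ((v*N + ((u:ℤ)*k^2+(v:ℤ)*k).toNat : ℕ) : ℤ)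
        = ((u * en ((k + (N:ℤ)).toNat) N + v*((k + (N:ℤ)).toNat) : ℕ) : ℤ) := by
      push_cast [Int.toNat_of_nonneg h0]
      rw [en_int, hcast]
      ring
    exact_mod_cast this

theorem master (u v d N : ℕ) (hu : 1 ≤ u) (hv : v < u) (hN : d + 1 ≤ N) :
    Cg (d+1) (th u v)
      ((∏ i ∈ range N, (1 - (X:PowerSeries ℚ)^(2*u*(i+1)))) *
       ((∏ i ∈ range N, (1 + (X:PowerSeries ℚ)^(u*(2*i+1)+v))) *
        (∏ i ∈ range N, (1 + (X:PowerSeries ℚ)^(u*(2*i+1)-v))))) := by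
  have hL1 : Psi u v (∏ i ∈ range N, (1 + Polynomial.C (Polynomial.X ^ (2*i+1)) * Polynomial.X))
      = ∏ i ∈ range N, (1 + (X:PowerSeries ℚ)^(u*(2*i+1)+v)) := by
    rw [map_prod]
    apply Finset.prod_congr rfl
    intro i _
    rw [map_add, map_one, map_mul, Psi_C, Psi_X, Phi_Xpow, ← pow_add]
  have hL2 : Psi u v (∏ i ∈ range N, (Polynomial.X + Polynomial.C (Polynomial.X ^ (2*i+1))))
      = (X:PowerSeries ℚ)^(v*N) *
          ∏ i ∈ range N, (1 + (X:PowerSeries ℚ)^(u*(2*i+1)-v)) := by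
    rw [map_prod]
    have hfac : ∀ i ∈ range N, Psi u v (Polynomial.X + Polynomial.C (Polynomial.X ^ (2*i+1)))
        = (X:PowerSeries ℚ)^v * (1 + (X:PowerSeries ℚ)^(u*(2*i+1)-v)) := by
      intro i _
      rw [map_add, Psi_X, Psi_C, Phi_Xpow]
      have hle : v ≤ u*(2*i+1) := by nlinarith
      have hexp : v + (u*(2*i+1)-v) = u*(2*i+1) := by omega
      have key : (X:PowerSeries ℚ)^(u*(2*i+1)) = X^v * X^(u*(2*i+1)-v) := by
        rw [← pow_add, hexp]
      rw [key]
      ring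
    rw [Finset.prod_congr rfl hfac, Finset.prod_mul_distrib, Finset.prod_const,
      Finset.card_range, ← pow_mul]
  have hR : Psi u v (Rmn N N) = ∑ j ∈ range (N+N+1),
      (X:PowerSeries ℚ)^(u * en j N + v*j) * Phi u (qb (N+N) j) := by
    rw [Rmn, map_sum]
    apply Finset.sum_congr rfl
    intro j _
    rw [map_mul, Psi_C, map_pow, Psi_X, map_mul, Phi_Xpow]
    rw [← pow_mul, pow_add]
    ring
  have E1 : (∏ i ∈ range N, (1 + (X:PowerSeries ℚ)^(u*(2*i+1)+v))) *
      ((X:PowerSeries ℚ)^(v*N) * ∏ i ∈ range N, (1 + (X:PowerSeries ℚ)^(u*(2*i+1)-v)))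
      = ∑ j ∈ range (N+N+1),
        (X:PowerSeries ℚ)^(u * en j N + v*j) * Phi u (qb (N+N) j) := by
    rw [← hL1, ← hL2, ← hR, ← map_mul]
    exact congrArg (Psi u v) (jtp N N)
  have E2 : (X:PowerSeries ℚ)^(v*N) *
      ((∏ i ∈ range N, (1 + (X:PowerSeries ℚ)^(u*(2*i+1)+v))) *
       (∏ i ∈ range N, (1 + (X:PowerSeries ℚ)^(u*(2*i+1)-v))) * Phi u (QQ (N+N)))
      = ∑ j ∈ range (N+N+1),
        (X:PowerSeries ℚ)^(u * en j N + v*j) * Phi u (qb (N+N) j * QQ (N+N)) := by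
    calc (X:PowerSeries ℚ)^(v*N) *
        ((∏ i ∈ range N, (1 + (X:PowerSeries ℚ)^(u*(2*i+1)+v))) *
         (∏ i ∈ range N, (1 + (X:PowerSeries ℚ)^(u*(2*i+1)-v))) * Phi u (QQ (N+N)))
        = ((∏ i ∈ range N, (1 + (X:PowerSeries ℚ)^(u*(2*i+1)+v))) *
            ((X:PowerSeries ℚ)^(v*N) *
              ∏ i ∈ range N, (1 + (X:PowerSeries ℚ)^(u*(2*i+1)-v)))) * Phi u (QQ (N+N)) := by
          ring
      _ = (∑ j ∈ range (N+N+1),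
            (X:PowerSeries ℚ)^(u * en j N + v*j) * Phi u (qb (N+N) j)) * Phi u (QQ (N+N)) := by
          rw [E1]
      _ = _ := by
          rw [Finset.sum_mul]
          apply Finset.sum_congr rfl
          intro j _
          rw [map_mul]
          ring
  have htm : ∀ j ∈ range (N+N+1),
      Cg (v*N + (d+1)) ((X:PowerSeries ℚ)^(u * en j N + v*j) * Phi u (qb (N+N) j * QQ (N+N)))
        ((X:PowerSeries ℚ)^(u * en j N + v*j)) := by
    intro j hj
    rw [Finset.mem_range] at hj
    have hjM : j ≤ N+N := by omega
    rw [qb_tails (N+N) j hjM, map_mul, Phi_tl, Phi_tl]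
    have t1 : Cg (2*u*(j+1)) (ptl u j (N+N)) 1 := ptl_cg_one le_rfl
    have t2 : Cg (2*u*((N+N-j)+1)) (ptl u (N+N-j) (N+N)) 1 := ptl_cg_one le_rfl
    set A := 2*u*(j+1)
    set B := 2*u*((N+N-j)+1)
    have hprod : Cg (min A B) (ptl u j (N+N) * ptl u (N+N-j) (N+N)) 1 := by
      have := (t1.mono (min_le_left A B)).mul (t2.mono (min_le_right A B))
      simpa using this
    have hfull := cg_mul_Xpow (e := u * en j N + v*j) hprod
    rw [mul_one] at hfull
    apply hfull.mono
    rcases le_total A B with hAB | hAB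
    · rw [min_eq_left hAB]
      exact key1 u v d N j hu hv hN hjM
    · rw [min_eq_right hAB]
      exact key2 u v d N j hu hv hN hjM
  have hsum : Cg (v*N + (d+1))
      (∑ j ∈ range (N+N+1),
        (X:PowerSeries ℚ)^(u * en j N + v*j) * Phi u (qb (N+N) j * QQ (N+N)))
      (∑ j ∈ range (N+N+1), (X:PowerSeries ℚ)^(u * en j N + v*j)) :=
    Cg.sum _ _ _ htm
  have c1 : Cg (v*N + (d+1)) ((X:PowerSeries ℚ)^(v*N) * th u v)
      ((X:PowerSeries ℚ)^(v*N) * (∑ k ∈ Finset.Icc (-(N:ℤ)) (N:ℤ),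
        (X:PowerSeries ℚ)^(((u:ℤ)*k^2+(v:ℤ)*k).toNat))) :=
    cg_mul_Xpow (th_cg_SZ u v d N hu hv hN)
  have c3 : Cg (v*N + (d+1))
      (∑ j ∈ range (N+N+1), (X:PowerSeries ℚ)^(u * en j N + v*j))
      ((X:PowerSeries ℚ)^(v*N) *
        ((∏ i ∈ range N, (1 + (X:PowerSeries ℚ)^(u*(2*i+1)+v))) *
         (∏ i ∈ range N, (1 + (X:PowerSeries ℚ)^(u*(2*i+1)-v))) * Phi u (QQ (N+N)))) := by
    have := hsum.symm
    rw [← E2] at this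
    exact this
  have total : Cg (v*N + (d+1)) ((X:PowerSeries ℚ)^(v*N) * th u v)
      ((X:PowerSeries ℚ)^(v*N) *
        ((∏ i ∈ range N, (1 + (X:PowerSeries ℚ)^(u*(2*i+1)+v))) *
         (∏ i ∈ range N, (1 + (X:PowerSeries ℚ)^(u*(2*i+1)-v))) * Phi u (QQ (N+N)))) := by
    apply c1.trans
    rw [reindex u v N hv]
    exact c3
  have main := cg_cancel_Xpow total
  have hQsplit : Phi u (QQ (N+N)) = ptl u 0 N * ptl u N (N+N) := by
    rw [QQ_eq_tl, Phi_tl, ptl, ptl, ptl, Finset.prod_Ico_consecutive _ (Nat.zero_le N) (by omega)]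
  have hdrop : Cg (d+1) (ptl u N (N+N)) 1 := ptl_cg_one (by nlinarith)
  have step2 : Cg (d+1)
      ((∏ i ∈ range N, (1 + (X:PowerSeries ℚ)^(u*(2*i+1)+v))) *
       (∏ i ∈ range N, (1 + (X:PowerSeries ℚ)^(u*(2*i+1)-v))) * Phi u (QQ (N+N)))
      ((∏ i ∈ range N, (1 - (X:PowerSeries ℚ)^(2*u*(i+1)))) *
       ((∏ i ∈ range N, (1 + (X:PowerSeries ℚ)^(u*(2*i+1)+v))) *
        (∏ i ∈ range N, (1 + (X:PowerSeries ℚ)^(u*(2*i+1)-v))))) := by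
    rw [hQsplit]
    have hp0 : ptl u 0 N = ∏ i ∈ range N, (1 - (X:PowerSeries ℚ)^(2*u*(i+1))) := by
      rw [ptl, Finset.range_eq_Ico]
    have : Cg (d+1)
        ((∏ i ∈ range N, (1 + (X:PowerSeries ℚ)^(u*(2*i+1)+v))) *
         (∏ i ∈ range N, (1 + (X:PowerSeries ℚ)^(u*(2*i+1)-v))) * (ptl u 0 N * ptl u N (N+N)))
        ((∏ i ∈ range N, (1 + (X:PowerSeries ℚ)^(u*(2*i+1)+v))) *
         (∏ i ∈ range N, (1 + (X:PowerSeries ℚ)^(u*(2*i+1)-v))) * (ptl u 0 N * 1)) :=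
      (Cg.refl _).mul ((Cg.refl _).mul hdrop)
    apply this.trans
    rw [hp0, mul_one]
    have : (∏ i ∈ range N, (1 + (X:PowerSeries ℚ)^(u*(2*i+1)+v))) *
         (∏ i ∈ range N, (1 + (X:PowerSeries ℚ)^(u*(2*i+1)-v))) *
         (∏ i ∈ range N, (1 - (X:PowerSeries ℚ)^(2*u*(i+1))))
        = (∏ i ∈ range N, (1 - (X:PowerSeries ℚ)^(2*u*(i+1)))) *
          ((∏ i ∈ range N, (1 + (X:PowerSeries ℚ)^(u*(2*i+1)+v))) *
           (∏ i ∈ range N, (1 + (X:PowerSeries ℚ)^(u*(2*i+1)-v)))) := by ring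
    rw [this]
    exact Cg.refl _
  exact main.trans step2

noncomputable def prm (e : ℕ → ℕ) (M : ℕ) : PowerSeries ℚ :=
  ∏ i ∈ range M, (1 - (X:PowerSeries ℚ)^(e i))

noncomputable def prp (e : ℕ → ℕ) (M : ℕ) : PowerSeries ℚ :=
  ∏ i ∈ range M, (1 + (X:PowerSeries ℚ)^(e i))

lemma prm_congr {e e' : ℕ → ℕ} (M : ℕ) (h : ∀ i, e i = e' i) : prm e M = prm e' M :=
  Finset.prod_congr rfl fun i _ => by rw [h i]

lemma prp_congr {e e' : ℕ → ℕ} (M : ℕ) (h : ∀ i, e i = e' i) : prp e M = prp e' M :=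
  Finset.prod_congr rfl fun i _ => by rw [h i]

lemma prod_range_even_odd (M : ℕ) (f : ℕ → PowerSeries ℚ) :
    ∏ i ∈ range (2*M), f i = (∏ i ∈ range M, f (2*i)) * ∏ i ∈ range M, f (2*i+1) := by
  induction M with
  | zero => simp
  | succ M ih =>
      have h2 : 2*(M+1) = 2*M + 1 + 1 := by ring
      rw [h2, Finset.prod_range_succ, Finset.prod_range_succ, ih,
        Finset.prod_range_succ, Finset.prod_range_succ]
      ring

lemma peo_m (e : ℕ → ℕ) (M : ℕ) :
    prm e (2*M) = prm (fun i => e (2*i)) M * prm (fun i => e (2*i+1)) M :=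
  prod_range_even_odd M _

lemma prm_len {e : ℕ → ℕ} {D M K : ℕ} (h : ∀ i, D ≤ e (M + i)) :
    Cg D (prm e (M+K)) (prm e M) := by
  rw [prm, Finset.prod_range_add]
  have htail : Cg D (∏ i ∈ range K, (1 - (X:PowerSeries ℚ)^(e (M+i)))) 1 := by
    have := Cg.prod (d := D) (range K)
      (fun i => 1 - (X:PowerSeries ℚ)^(e (M+i))) (fun _ => 1)
      (fun i _ => cg_one_sub (h i))
    simpa using this
  have := (Cg.refl (d := D) (prm e M)).mul htail
  rw [mul_one] at this
  exact this

lemma prm_merge (e : ℕ → ℕ) (M : ℕ) :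
    prm e M * prp e M = prm (fun i => 2*(e i)) M := by
  rw [prm, prp, prm, ← Finset.prod_mul_distrib]
  apply Finset.prod_congr rfl
  intro i _
  have h : (X:PowerSeries ℚ)^(e i) * (X:PowerSeries ℚ)^(e i) = (X:PowerSeries ℚ)^(2*(e i)) := by
    rw [← pow_add]; congr 1; ring
  linear_combination -h

lemma master' (u v d N : ℕ) (hu : 1 ≤ u) (hv : v < u) (hN : d + 1 ≤ N) :
    Cg (d+1) (th u v)
      (prm (fun i => 2*u*(i+1)) N *
        (prp (fun i => u*(2*i+1)+v) N * prp (fun i => u*(2*i+1)-v) N)) :=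
  master u v d N hu hv hN

lemma qp_cg' {a c d M : ℕ} (ha : 1 ≤ a) (hc : 1 ≤ c) (hM : d ≤ M) :
    Cg d (qp a c) (prm (fun i => a + c*i) M) := qp_cg ha hc hM

lemma idA (s : ℕ) (hs : 1 ≤ s) :
    th s 0 * qp s s ^ 2 * qp (4*s) (4*s) ^ 2 = qp (2*s) (2*s) ^ 5 := by
  apply eq_of_forall_cg
  intro D
  rcases D with _ | d
  · simpa [Cg] using one_dvd _
  set N : ℕ := d + 1 with hNdef
  have hN : d + 1 ≤ N := le_rfl
  set ca : PowerSeries ℚ := prm (fun i => 2*s*(2*i+1)) N with hca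
  set cb : PowerSeries ℚ := prm (fun i => 4*s*(i+1)) N with hcb
  set cc : PowerSeries ℚ := prm (fun i => 2*s*(i+1)) N with hcc
  set cp : PowerSeries ℚ := prp (fun i => s*(2*i+1)) N with hcp
  set cm : PowerSeries ℚ := prm (fun i => s*(2*i+1)) N with hcm
  have S1 : Cg (d+1) (th s 0) (cc * (cp * cp)) := by
    have h := master' s 0 d N hs (by omega) hN
    have e1 : prp (fun i => s*(2*i+1)+0) N = cp := prp_congr N (fun i => by omega)
    have e2 : prp (fun i => s*(2*i+1)-0) N = cp := prp_congr N (fun i => by omega)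
    rw [e1, e2] at h
    exact h
  have S2 : Cg (d+1) (qp s s) (cm * cc) := by
    have h := qp_cg' (a := s) (c := s) hs hs (show d+1 ≤ 2*N by omega)
    have e0 : prm (fun i => s + s*i) (2*N)
        = prm (fun i => s + s*(2*i)) N * prm (fun i => s + s*(2*i+1)) N := peo_m _ N
    have e1 : prm (fun i => s + s*(2*i)) N = cm := prm_congr N (fun i => by ring)
    have e2 : prm (fun i => s + s*(2*i+1)) N = cc := prm_congr N (fun i => by ring)
    rw [e0, e1, e2] at h
    exact h
  have S3 : Cg (d+1) (qp (4*s) (4*s)) cb := by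
    have h := qp_cg' (a := 4*s) (c := 4*s) (by omega) (by omega) (show d+1 ≤ N by omega)
    have e1 : prm (fun i => 4*s + 4*s*i) N = cb := prm_congr N (fun i => by ring)
    rw [e1] at h
    exact h
  have S4 : Cg (d+1) (qp (2*s) (2*s)) (ca * cb) := by
    have h := qp_cg' (a := 2*s) (c := 2*s) (by omega) (by omega) (show d+1 ≤ 2*N by omega)
    have e0 : prm (fun i => 2*s + 2*s*i) (2*N)
        = prm (fun i => 2*s + 2*s*(2*i)) N * prm (fun i => 2*s + 2*s*(2*i+1)) N := peo_m _ N
    have e1 : prm (fun i => 2*s + 2*s*(2*i)) N = ca := prm_congr N (fun i => by ring)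
    have e2 : prm (fun i => 2*s + 2*s*(2*i+1)) N = cb := prm_congr N (fun i => by ring)
    rw [e0, e1, e2] at h
    exact h
  have S5 : Cg (d+1) cc (ca * cb) := by
    have hlen : Cg (d+1) (prm (fun i => 2*s*(i+1)) (N+N)) cc :=
      prm_len (fun i => by nlinarith)
    have e0 : prm (fun i => 2*s*(i+1)) (N+N) = ca * cb := by
      rw [show N+N = 2*N by ring, peo_m]
      congr 1
      exact prm_congr N (fun i => by ring)
    rw [e0] at hlen
    exact hlen.symm
  have hmp : cm * cp = ca := by
    rw [hcm, hcp, prm_merge]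
    exact prm_congr N (fun i => by ring)
  have L : Cg (d+1) (th s 0 * qp s s ^ 2 * qp (4*s) (4*s) ^ 2)
      ((cc * (cp*cp)) * (cm*cc)^2 * cb^2) := (S1.mul (S2.pow 2)).mul (S3.pow 2)
  have M0 : Cg (d+1) (cc*cc*cc*(ca*ca)*(cb*cb)) ((ca*cb)^5) := by
    have h := (((S5.mul S5).mul S5).mul (Cg.refl (ca*ca))).mul (Cg.refl (cb*cb))
    rw [show (ca*cb)*(ca*cb)*(ca*cb)*(ca*ca)*(cb*cb) = (ca*cb)^5 from by ring] at h
    exact h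
  have e1 : (cc * (cp*cp)) * (cm*cc)^2 * cb^2 = cc*cc*cc*((cm*cp)*(cm*cp))*(cb*cb) := by
    ring
  rw [hmp] at e1
  have M1 : Cg (d+1) ((cc * (cp*cp)) * (cm*cc)^2 * cb^2) ((ca*cb)^5) := by
    rw [e1]
    exact M0
  exact (L.trans M1).trans ((S4.pow 5).symm)

lemma idB (s : ℕ) (hs : 1 ≤ s) :
    qp (2*s) (2*s) ^ 2 = qp s s * th (2*s) s := by
  apply eq_of_forall_cg
  intro D
  rcases D with _ | d
  · simpa [Cg] using one_dvd _
  set N : ℕ := d + 1 with hNdef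
  have hN : d + 1 ≤ N := le_rfl
  set a2 : PowerSeries ℚ := prm (fun i => 2*s*(2*i+1)) N with ha2
  set b2 : PowerSeries ℚ := prm (fun i => 4*s*(i+1)) N with hb2
  set c1 : PowerSeries ℚ := prm (fun i => s*(4*i+1)) N with hc1
  set c3 : PowerSeries ℚ := prm (fun i => s*(4*i+3)) N with hc3
  set p1 : PowerSeries ℚ := prp (fun i => s*(4*i+1)) N with hp1
  set p3 : PowerSeries ℚ := prp (fun i => s*(4*i+3)) N with hp3
  have T1 : Cg (d+1) (th (2*s) s) (b2 * (p3 * p1)) := by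
    have h := master' (2*s) s d N (by omega) (by omega) hN
    have e0 : prm (fun i => 2*(2*s)*(i+1)) N = b2 := prm_congr N (fun i => by ring)
    have e1 : prp (fun i => 2*s*(2*i+1)+s) N = p3 := prp_congr N (fun i => by ring)
    have e2 : prp (fun i => 2*s*(2*i+1)-s) N = p1 := prp_congr N (fun i => by
      have h' : 2*s*(2*i+1) = s*(4*i+1)+s := by ring
      omega)
    rw [e0, e1, e2] at h
    exact h
  have T2 : Cg (d+1) (qp s s) ((c1*c3) * (a2*b2)) := by
    have h := qp_cg' (a := s) (c := s) hs hs (show d+1 ≤ 4*N by omega)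
    have e0 : prm (fun i => s + s*i) (4*N)
        = prm (fun i => s + s*(2*i)) (2*N) * prm (fun i => s + s*(2*i+1)) (2*N) := by
      rw [show 4*N = 2*(2*N) by ring, peo_m]
    have e1 : prm (fun i => s + s*(2*i)) (2*N)
        = prm (fun i => s + s*(2*(2*i))) N * prm (fun i => s + s*(2*(2*i+1))) N := peo_m _ N
    have e2 : prm (fun i => s + s*(2*i+1)) (2*N)
        = prm (fun i => s + s*(2*(2*i)+1)) N * prm (fun i => s + s*(2*(2*i+1)+1)) N := peo_m _ N
    have f1 : prm (fun i => s + s*(2*(2*i))) N = c1 := prm_congr N (fun i => by ring)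
    have f2 : prm (fun i => s + s*(2*(2*i+1))) N = c3 := prm_congr N (fun i => by ring)
    have f3 : prm (fun i => s + s*(2*(2*i)+1)) N = a2 := prm_congr N (fun i => by ring)
    have f4 : prm (fun i => s + s*(2*(2*i+1)+1)) N = b2 := prm_congr N (fun i => by ring)
    rw [e0, e1, e2, f1, f2, f3, f4] at h
    exact h
  have T3 : Cg (d+1) (qp (2*s) (2*s)) (a2 * b2) := by
    have h := qp_cg' (a := 2*s) (c := 2*s) (by omega) (by omega) (show d+1 ≤ 2*N by omega)
    have e0 : prm (fun i => 2*s + 2*s*i) (2*N)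
        = prm (fun i => 2*s + 2*s*(2*i)) N * prm (fun i => 2*s + 2*s*(2*i+1)) N := peo_m _ N
    have e1 : prm (fun i => 2*s + 2*s*(2*i)) N = a2 := prm_congr N (fun i => by ring)
    have e2 : prm (fun i => 2*s + 2*s*(2*i+1)) N = b2 := prm_congr N (fun i => by ring)
    rw [e0, e1, e2] at h
    exact h
  have hm1 : c1 * p1 = prm (fun i => 2*(s*(4*i+1))) N := by rw [hc1, hp1, prm_merge]
  have hm3 : c3 * p3 = prm (fun i => 2*(s*(4*i+3))) N := by rw [hc3, hp3, prm_merge]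
  have hint : prm (fun i => 2*s*(2*i+1)) (2*N)
      = prm (fun i => 2*(s*(4*i+1))) N * prm (fun i => 2*(s*(4*i+3))) N := by
    rw [peo_m]
    congr 1
    · exact prm_congr N (fun i => by ring)
    · exact prm_congr N (fun i => by ring)
  have hlen2 : Cg (d+1) (prm (fun i => 2*s*(2*i+1)) (N+N)) a2 :=
    prm_len (fun i => by nlinarith)
  rw [show N+N = 2*N by ring] at hlen2
  have step1 : Cg (d+1) (qp s s * th (2*s) s) (((c1*c3)*(a2*b2)) * (b2*(p3*p1))) :=
    T2.mul T1
  have e1 : ((c1*c3)*(a2*b2)) * (b2*(p3*p1)) = (a2*(b2*b2)) * ((c1*p1)*(c3*p3)) := by ring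
  rw [hm1, hm3, ← hint] at e1
  have step2 : Cg (d+1) ((a2*(b2*b2)) * prm (fun i => 2*s*(2*i+1)) (2*N))
      ((a2*(b2*b2)) * a2) := (Cg.refl _).mul hlen2
  have RHSC : Cg (d+1) (qp s s * th (2*s) s) ((a2*b2)^2) := by
    apply step1.trans
    rw [e1]
    apply step2.trans
    rw [show (a2*(b2*b2))*a2 = (a2*b2)^2 from by ring]
    exact Cg.refl _
  exact (T3.pow 2).trans RHSC.symm

lemma th_cg_SZ' (u v d : ℕ) (a b : ℤ) (hu : 1 ≤ u) (hv : v < u)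
    (ha : a ≤ -((d:ℤ)+1)) (hb : (d:ℤ)+1 ≤ b) :
    Cg (d+1) (th u v)
      (∑ k ∈ Finset.Icc a b, (X:PowerSeries ℚ)^(((u:ℤ)*k^2+(v:ℤ)*k).toNat)) := by
  rw [cg_iff]
  intro m hm
  rw [th_coeff hu hv m (d+1) (by omega)]
  rw [map_sum]
  simp only [coeff_X_pow]
  have hcond : ∀ k ∈ Finset.Icc a b,
      (if m = ((u:ℤ)*k^2+(v:ℤ)*k).toNat then (1:ℚ) else 0)
        = (if (u:ℤ)*k^2+(v:ℤ)*k = (m:ℤ) then (1:ℚ) else 0) := by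
    intro k _
    have h0 := th_e_nonneg hv k
    by_cases hc : (u:ℤ)*k^2+(v:ℤ)*k = (m:ℤ)
    · rw [if_pos hc, if_pos]
      rw [hc]
      exact (Int.toNat_natCast m).symm
    · rw [if_neg hc, if_neg]
      intro hm'
      apply hc
      rw [hm']
      exact (Int.toNat_of_nonneg h0).symm
  rw [Finset.sum_congr rfl hcond, Finset.sum_boole]
  congr 2
  apply Finset.ext
  intro k
  simp only [Finset.mem_filter, Finset.mem_Icc]
  constructor
  · rintro ⟨⟨h1, h2⟩, h3⟩
    have hab := th_abs_le hu hv h3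
    exact ⟨⟨by omega, by omega⟩, h3⟩
  · rintro ⟨⟨h1, h2⟩, h3⟩
    have hab := th_abs_le hu hv h3
    exact ⟨⟨by omega, by omega⟩, h3⟩

lemma idD : th 1 0 = th 4 0 + 2 * X * th 16 8 := by
  apply eq_of_forall_cg
  intro D
  rcases D with _ | d
  · simpa [Cg] using one_dvd _
  set N : ℕ := d + 1 with hN
  set B : ℤ := 4*(N:ℤ)+3 with hB
  -- congruent sum representations
  have h1 : Cg (d+1) (th 1 0)
      (∑ k ∈ Finset.Icc (-B) B, (X:PowerSeries ℚ)^((((1:ℕ):ℤ)*k^2+((0:ℕ):ℤ)*k).toNat)) :=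
    th_cg_SZ' 1 0 d (-B) B (by omega) (by omega) (by omega) (by omega)
  have h4 : Cg (d+1) (th 4 0)
      (∑ k ∈ Finset.Icc (-2*(N:ℤ)-1) (2*(N:ℤ)+1),
        (X:PowerSeries ℚ)^((((4:ℕ):ℤ)*k^2+((0:ℕ):ℤ)*k).toNat)) :=
    th_cg_SZ' 4 0 d (-2*(N:ℤ)-1) (2*(N:ℤ)+1) (by omega) (by omega) (by omega) (by omega)
  have h168 : Cg (d+1) (th 16 8)
      (∑ k ∈ Finset.Icc (-(N:ℤ)-1) (N:ℤ), (X:PowerSeries ℚ)^((((16:ℕ):ℤ)*k^2+((8:ℕ):ℤ)*k).toNat)) :=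
    th_cg_SZ' 16 8 d (-(N:ℤ)-1) (N:ℤ) (by omega) (by omega) (by omega) (by omega)
  simp only [Nat.cast_one, Nat.cast_zero, Nat.cast_ofNat, one_mul, zero_mul, add_zero] at h1 h4 h168
  -- split the big sum by parity
  have P1 : (∑ k ∈ Finset.Icc (-B) B, (X:PowerSeries ℚ)^((k^2).toNat))
      = (∑ k ∈ (Finset.Icc (-B) B).filter (fun k => k % 2 = 0), (X:PowerSeries ℚ)^((k^2).toNat))
        + ∑ k ∈ (Finset.Icc (-B) B).filter (fun k => ¬ k % 2 = 0),
            (X:PowerSeries ℚ)^((k^2).toNat) :=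
    (Finset.sum_filter_add_sum_filter_not _ _ _).symm
  have P2 : (∑ k ∈ (Finset.Icc (-B) B).filter (fun k => k % 2 = 0),
        (X:PowerSeries ℚ)^((k^2).toNat))
      = ∑ j ∈ Finset.Icc (-2*(N:ℤ)-1) (2*(N:ℤ)+1), (X:PowerSeries ℚ)^((4*j^2).toNat) := by
    refine Finset.sum_nbij' (i := fun k => k / 2) (j := fun j => 2*j) ?_ ?_ ?_ ?_ ?_
    · intro k hk
      simp only [Finset.mem_filter, Finset.mem_Icc] at hk
      simp only [Finset.mem_Icc]
      omega
    · intro j hj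
      simp only [Finset.mem_Icc] at hj
      simp only [Finset.mem_filter, Finset.mem_Icc]
      omega
    · intro k hk
      simp only [Finset.mem_filter, Finset.mem_Icc] at hk
      omega
    · intro j hj
      omega
    · intro k hk
      simp only [Finset.mem_filter, Finset.mem_Icc] at hk
      congr 1
      have hk2 : k = 2*(k/2) := by omega
      congr 1
      conv_lhs => rw [hk2]
      ring
  have P3 : (∑ k ∈ (Finset.Icc (-B) B).filter (fun k => ¬ k % 2 = 0),
        (X:PowerSeries ℚ)^((k^2).toNat))
      = ∑ j ∈ Finset.Icc (-2*(N:ℤ)-2) (2*(N:ℤ)+1), (X:PowerSeries ℚ)^(((2*j+1)^2).toNat) := by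
    refine Finset.sum_nbij' (i := fun k => (k-1) / 2) (j := fun j => 2*j+1) ?_ ?_ ?_ ?_ ?_
    · intro k hk
      simp only [Finset.mem_filter, Finset.mem_Icc] at hk
      simp only [Finset.mem_Icc]
      omega
    · intro j hj
      simp only [Finset.mem_Icc] at hj
      simp only [Finset.mem_filter, Finset.mem_Icc]
      omega
    · intro k hk
      simp only [Finset.mem_filter, Finset.mem_Icc] at hk
      omega
    · intro j hj
      omega
    · intro k hk
      simp only [Finset.mem_filter, Finset.mem_Icc] at hk
      congr 1
      have hk2 : k = 2*((k-1)/2)+1 := by omega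
      congr 1
      conv_lhs => rw [hk2]
  have P4 : (∑ j ∈ Finset.Icc (-2*(N:ℤ)-2) (2*(N:ℤ)+1), (X:PowerSeries ℚ)^(((2*j+1)^2).toNat))
      = (∑ j ∈ (Finset.Icc (-2*(N:ℤ)-2) (2*(N:ℤ)+1)).filter (fun j => j % 2 = 0),
          (X:PowerSeries ℚ)^(((2*j+1)^2).toNat))
        + ∑ j ∈ (Finset.Icc (-2*(N:ℤ)-2) (2*(N:ℤ)+1)).filter (fun j => ¬ j % 2 = 0),
            (X:PowerSeries ℚ)^(((2*j+1)^2).toNat) :=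
    (Finset.sum_filter_add_sum_filter_not _ _ _).symm
  have P5 : (∑ j ∈ (Finset.Icc (-2*(N:ℤ)-2) (2*(N:ℤ)+1)).filter (fun j => j % 2 = 0),
        (X:PowerSeries ℚ)^(((2*j+1)^2).toNat))
      = ∑ l ∈ Finset.Icc (-(N:ℤ)-1) (N:ℤ), (X:PowerSeries ℚ)^((1+(16*l^2+8*l)).toNat) := by
    refine Finset.sum_nbij' (i := fun j => j / 2) (j := fun l => 2*l) ?_ ?_ ?_ ?_ ?_
    · intro k hk
      simp only [Finset.mem_filter, Finset.mem_Icc] at hk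
      simp only [Finset.mem_Icc]
      omega
    · intro l hl
      simp only [Finset.mem_Icc] at hl
      simp only [Finset.mem_filter, Finset.mem_Icc]
      omega
    · intro k hk
      simp only [Finset.mem_filter, Finset.mem_Icc] at hk
      omega
    · intro l hl
      omega
    · intro k hk
      simp only [Finset.mem_filter, Finset.mem_Icc] at hk
      congr 1
      have hk2 : k = 2*(k/2) := by omega
      congr 1
      conv_lhs => rw [hk2]
      ring
  have P6 : (∑ j ∈ (Finset.Icc (-2*(N:ℤ)-2) (2*(N:ℤ)+1)).filter (fun j => ¬ j % 2 = 0),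
        (X:PowerSeries ℚ)^(((2*j+1)^2).toNat))
      = ∑ l ∈ Finset.Icc (-(N:ℤ)-1) (N:ℤ), (X:PowerSeries ℚ)^((1+(16*l^2+8*l)).toNat) := by
    refine Finset.sum_nbij' (i := fun j => -((j+1) / 2)) (j := fun l => -2*l-1) ?_ ?_ ?_ ?_ ?_
    · intro k hk
      simp only [Finset.mem_filter, Finset.mem_Icc] at hk
      simp only [Finset.mem_Icc]
      omega
    · intro l hl
      simp only [Finset.mem_Icc] at hl
      simp only [Finset.mem_filter, Finset.mem_Icc]
      omega
    · intro k hk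
      simp only [Finset.mem_filter, Finset.mem_Icc] at hk
      omega
    · intro l hl
      omega
    · intro k hk
      simp only [Finset.mem_filter, Finset.mem_Icc] at hk
      congr 1
      have hk2 : k = 2*(-(-((k+1)/2)))-1 := by omega
      congr 1
      conv_lhs => rw [hk2]
      ring
  have P7 : (∑ l ∈ Finset.Icc (-(N:ℤ)-1) (N:ℤ), (X:PowerSeries ℚ)^((1+(16*l^2+8*l)).toNat))
      = X * ∑ l ∈ Finset.Icc (-(N:ℤ)-1) (N:ℤ), (X:PowerSeries ℚ)^((16*l^2+8*l).toNat) := by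
    rw [Finset.mul_sum]
    apply Finset.sum_congr rfl
    intro l _
    have h0 : (0:ℤ) ≤ 16*l^2+8*l := by
      have := th_e_nonneg (u := 16) (v := 8) (by omega) l
      push_cast at this
      linarith
    have : (1+(16*l^2+8*l)).toNat = 1 + (16*l^2+8*l).toNat := by omega
    rw [this, pow_add, pow_one]
  -- assemble
  have core : (∑ k ∈ Finset.Icc (-B) B, (X:PowerSeries ℚ)^((k^2).toNat))
      = (∑ k ∈ Finset.Icc (-2*(N:ℤ)-1) (2*(N:ℤ)+1), (X:PowerSeries ℚ)^((4*k^2).toNat))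
        + 2 * X * ∑ l ∈ Finset.Icc (-(N:ℤ)-1) (N:ℤ), (X:PowerSeries ℚ)^((16*l^2+8*l).toNat) := by
    rw [P1, P2, P3, P4, P5, P6, P7]
    ring
  have rhs : Cg (d+1) (th 4 0 + 2 * X * th 16 8)
      ((∑ k ∈ Finset.Icc (-2*(N:ℤ)-1) (2*(N:ℤ)+1), (X:PowerSeries ℚ)^((4*k^2).toNat))
        + 2 * X * ∑ l ∈ Finset.Icc (-(N:ℤ)-1) (N:ℤ), (X:PowerSeries ℚ)^((16*l^2+8*l).toNat)) :=
    h4.add ((Cg.refl (2*X)).mul h168)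
  rw [← core] at rhs
  exact h1.trans rhs.symm

lemma cleared :
    qp 2 2 ^ 5 * qp 8 8 * qp 16 16 ^ 2
      = qp 1 1 ^ 2 * qp 8 8 ^ 6 + 2 * X * (qp 1 1 ^ 2 * qp 4 4 ^ 2 * qp 16 16 ^ 4) := by
  have hA1 := idA 1 (by norm_num)
  have hA4 := idA 4 (by norm_num)
  have hB8 := idB 8 (by norm_num)
  have hD := idD
  norm_num at hA1 hA4 hB8
  linear_combination (-(qp 8 8 * qp 16 16^2)) * hA1
    + (qp 8 8 * qp 1 1^2) * hA4
    - (2 * X * qp 16 16^2 * qp 1 1^2 * qp 4 4^2) * hB8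
    + (qp 8 8 * qp 16 16^2 * qp 1 1^2 * qp 4 4^2) * hD

end TwoDissect

open TwoDissect in
/-- The 2-dissection of `1/(q;q)_∞²`:
`1/(q;q)_∞² = (q⁸;q⁸)_∞⁵/((q²;q²)_∞⁵ (q¹⁶;q¹⁶)_∞²) + 2q (q⁴;q⁴)_∞² (q¹⁶;q¹⁶)_∞²/((q²;q²)_∞⁵ (q⁸;q⁸)_∞)`. -/
theorem two_dissection :
    (qp 1 1 ^ 2)⁻¹ =
      qp 8 8 ^ 5 * (qp 2 2 ^ 5 * qp 16 16 ^ 2)⁻¹ +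
        2 * PowerSeries.X * qp 4 4 ^ 2 * qp 16 16 ^ 2 * (qp 2 2 ^ 5 * qp 8 8)⁻¹ := by
  have c1 : constantCoeff (qp 1 1) = 1 := qp_const 1 1 (by norm_num)
  have c2 : constantCoeff (qp 2 2) = 1 := qp_const 2 2 (by norm_num)
  have c8 : constantCoeff (qp 8 8) = 1 := qp_const 8 8 (by norm_num)
  have c16 : constantCoeff (qp 16 16) = 1 := qp_const 16 16 (by norm_num)
  have hW : (qp 1 1 ^ 2) * (qp 1 1 ^ 2)⁻¹ = 1 :=
    PowerSeries.mul_inv_cancel _ (by simp [map_pow, c1])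
  have hU : (qp 2 2 ^ 5 * qp 16 16 ^ 2) * (qp 2 2 ^ 5 * qp 16 16 ^ 2)⁻¹ = 1 :=
    PowerSeries.mul_inv_cancel _ (by simp [map_mul, map_pow, c2, c16])
  have hV : (qp 2 2 ^ 5 * qp 8 8) * (qp 2 2 ^ 5 * qp 8 8)⁻¹ = 1 :=
    PowerSeries.mul_inv_cancel _ (by simp [map_mul, map_pow, c2, c8])
  have hne : (qp 1 1 ^ 2) * (qp 2 2 ^ 5 * qp 16 16 ^ 2) * (qp 2 2 ^ 5 * qp 8 8) ≠ 0 := by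
    intro h
    have h0 := congrArg (constantCoeff) h
    simp [map_mul, map_pow, c1, c2, c8, c16] at h0
  apply mul_right_cancel₀ hne
  linear_combination ((qp 2 2^5 * qp 16 16^2) * (qp 2 2^5 * qp 8 8)) * hW
    - (qp 8 8^5 * qp 1 1^2 * (qp 2 2^5 * qp 8 8)) * hU
    - (2 * PowerSeries.X * qp 4 4^2 * qp 16 16^2 * qp 1 1^2 * (qp 2 2^5 * qp 16 16^2)) * hV
    + (qp 2 2^5) * cleared
end

section
/- ∑_{n≥0} EO-bar(8n+6) q^n = 4 (q^2;q^2)_∞ (q^4;q^4)_∞ (q^8;q^8)_∞^2 / (q;q)_∞^3. In particular EO-bar(8n+6) ≡ 0 (mod 4) for all n ≥ 0. -/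
open PowerSeries

namespace EOaux

open Finset

noncomputable section

abbrev A := PowerSeries ℚ

/-- sum over even indices in `range (2m+1)` -/
lemma sum_even_odd (m : ℕ) (G : ℕ → ℚ) :
    ∑ k ∈ range (2*m+1), (if 2 ∣ k then G (k/2) else 0) = ∑ j ∈ range (m+1), G j := by
  induction m with
  | zero => simp
  | succ m ih =>
      have h1 : 2*(m+1)+1 = (2*m+1) + 1 + 1 := by ring
      rw [h1, Finset.sum_range_succ, Finset.sum_range_succ,
        Finset.sum_range_succ (f := G)]
      rw [ih]
      have h2 : ¬ (2 ∣ (2*m+1)) := by omega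
      have h3 : 2 ∣ (2*m+1+1) := by omega
      have h4 : (2*m+1+1)/2 = m+1 := by omega
      simp [h2, h3, h4]

lemma sum_even_odd' (m : ℕ) (G : ℕ → ℚ) :
    ∑ k ∈ range (2*m+2), (if 2 ∣ k then G (k/2) else 0) = ∑ j ∈ range (m+1), G j := by
  have h1 : 2*m+2 = (2*m+1) + 1 := by ring
  rw [h1, Finset.sum_range_succ, sum_even_odd]
  have h2 : ¬ (2 ∣ (2*m+1)) := by omega
  simp [h2]

lemma coeff_mul_range (n : ℕ) (f g : A) :
    (coeff n) (f * g) = ∑ k ∈ range (n+1), (coeff k f) * (coeff (n-k) g) := by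
  rw [PowerSeries.coeff_mul, Finset.Nat.sum_antidiagonal_eq_sum_range_succ_mk]

/-- substitution `X ↦ X^2` as a ring hom -/
def sqh : A →+* A where
  toFun f := PowerSeries.mk fun m => if 2 ∣ m then coeff (m/2) f else 0
  map_one' := by
    ext n
    simp only [coeff_mk, coeff_one]
    rcases Nat.eq_zero_or_pos n with h | h
    · simp [h]
    · have : n ≠ 0 := by omega
      split_ifs with h1 h2 <;> simp_all <;> omega
  map_mul' f g := by
    ext n
    simp only [coeff_mk]
    symm
    rw [coeff_mul_range]
    rcases Nat.even_or_odd n with ⟨m, hm⟩ | ⟨m, hm⟩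
    · subst hm
      have hmm : m + m = 2*m := by ring
      rw [hmm]
      have h2 : 2 ∣ 2*m := ⟨m, rfl⟩
      rw [if_pos h2]
      have h3 : ∀ k ∈ range (2*m+1),
          (coeff k (PowerSeries.mk fun l => if 2 ∣ l then coeff (l/2) f else 0)) *
          (coeff (2*m-k) (PowerSeries.mk fun l => if 2 ∣ l then coeff (l/2) g else 0)) =
          (if 2 ∣ k then (coeff (k/2) f) * (coeff (m - k/2) g) else 0) := by
        intro k hk
        simp only [Finset.mem_range] at hk
        simp only [coeff_mk]
        by_cases h1 : 2 ∣ k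
        · have h5 : 2 ∣ 2*m - k := by omega
          have h6 : (2*m-k)/2 = m - k/2 := by omega
          rw [if_pos h1, if_pos h5, if_pos h1, h6]
        · have h5 : ¬ 2 ∣ 2*m - k := by omega
          rw [if_neg h1, if_neg h1, if_neg h5, zero_mul]
      rw [Finset.sum_congr rfl h3, sum_even_odd m
        (fun j => (coeff j f) * (coeff (m - j) g))]
      have h4 : 2*m/2 = m := by omega
      rw [h4, coeff_mul_range]
    · subst hm
      have h2 : ¬ 2 ∣ (2*m + 1) := by omega
      rw [if_neg h2]
      apply Finset.sum_eq_zero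
      intro k hk
      simp only [Finset.mem_range] at hk
      simp only [coeff_mk]
      by_cases h1 : 2 ∣ k
      · have h5 : ¬ 2 ∣ 2*m + 1 - k := by omega
        rw [if_pos h1, if_neg h5, mul_zero]
      · rw [if_neg h1, zero_mul]
  map_zero' := by ext n; simp only [coeff_mk, map_zero]; split <;> rfl
  map_add' f g := by
    ext n
    simp only [coeff_mk, map_add]
    split <;> simp

lemma coeff_sqh (f : A) (m : ℕ) :
    coeff m (sqh f) = if 2 ∣ m then coeff (m/2) f else 0 := by
  simp [sqh, coeff_mk]

lemma coeff_sqh_even (f : A) (m : ℕ) : coeff (2*m) (sqh f) = coeff m f := by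
  rw [coeff_sqh]
  have h : 2 ∣ 2*m := ⟨m, rfl⟩
  rw [if_pos h]
  have h2 : 2*m/2 = m := by omega
  rw [h2]

lemma coeff_sqh_odd (f : A) (m : ℕ) : coeff (2*m+1) (sqh f) = 0 := by
  rw [coeff_sqh, if_neg (by omega)]

lemma sqh_X : sqh (X : A) = X^2 := by
  ext n
  rw [coeff_sqh]
  simp only [coeff_X, coeff_X_pow]
  split_ifs with h1 h2 h3 h4 <;> first | rfl | omega

lemma sqh_injective : Function.Injective sqh := by
  intro f g h
  ext n
  have := congrArg (coeff (2*n)) h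
  rwa [coeff_sqh_even, coeff_sqh_even] at this

/-- even part extractor -/
def Ev (f : A) : A := PowerSeries.mk fun n => coeff (2*n) f
/-- odd part extractor -/
def Od (f : A) : A := PowerSeries.mk fun n => coeff (2*n+1) f

lemma coeff_Ev (f : A) (n : ℕ) : coeff n (Ev f) = coeff (2*n) f := coeff_mk _ _
lemma coeff_Od (f : A) (n : ℕ) : coeff n (Od f) = coeff (2*n+1) f := coeff_mk _ _

lemma Ev_sqh_mul (g f : A) : Ev (sqh g * f) = g * Ev f := by
  ext n
  rw [coeff_Ev, coeff_mul_range, coeff_mul_range]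
  have h3 : ∀ k ∈ range (2*n+1),
      (coeff k (sqh g)) * (coeff (2*n-k) f) =
      (if 2 ∣ k then (coeff (k/2) g) * (coeff (2*(n - k/2)) f) else 0) := by
    intro k hk
    simp only [Finset.mem_range] at hk
    rw [coeff_sqh]
    split_ifs with h
    · have h6 : 2*n - k = 2*(n - k/2) := by omega
      rw [h6]
    · ring
  rw [Finset.sum_congr rfl h3, sum_even_odd n (fun j => (coeff j g) * (coeff (2*(n-j)) f))]
  apply Finset.sum_congr rfl
  intro j hj
  rw [coeff_Ev]

lemma Od_sqh_mul (g f : A) : Od (sqh g * f) = g * Od f := by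
  ext n
  rw [coeff_Od, coeff_mul_range, coeff_mul_range]
  have e1 : 2*n+1+1 = 2*n+2 := rfl
  rw [e1]
  have h3 : ∀ k ∈ range (2*n+2),
      (coeff k (sqh g)) * (coeff (2*n+1-k) f) =
      (if 2 ∣ k then (coeff (k/2) g) * (coeff (2*(n - k/2)+1) f) else 0) := by
    intro k hk
    simp only [Finset.mem_range] at hk
    rw [coeff_sqh]
    split_ifs with h
    · have h6 : 2*n+1 - k = 2*(n - k/2)+1 := by omega
      rw [h6]
    · ring
  rw [Finset.sum_congr rfl h3, sum_even_odd' n (fun j => (coeff j g) * (coeff (2*(n-j)+1) f))]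
  apply Finset.sum_congr rfl
  intro j hj
  rw [coeff_Od]

lemma Od_sqh (g : A) : Od (sqh g) = 0 := by
  ext n
  rw [coeff_Od, coeff_sqh, if_neg (by omega)]
  simp

lemma coeff_X_mul' (f : A) (m : ℕ) :
    coeff m (X * f) = if m = 0 then 0 else coeff (m-1) f := by
  cases m with
  | zero => simp
  | succ m => simp [PowerSeries.coeff_succ_X_mul]

lemma decomp (f : A) : f = sqh (Ev f) + X * sqh (Od f) := by
  ext m
  rw [map_add, coeff_sqh, coeff_X_mul', ]
  rcases Nat.even_or_odd m with ⟨j, hj⟩ | ⟨j, hj⟩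
  · have h1 : 2 ∣ m := by omega
    rw [if_pos h1, coeff_Ev]
    rcases Nat.eq_zero_or_pos m with h | h
    · simp [h]
    · rw [if_neg (by omega), coeff_sqh, if_neg (by omega)]
      have : 2 * (m/2) = m := by omega
      rw [this, add_zero]
  · have h1 : ¬ 2 ∣ m := by omega
    rw [if_neg h1, if_neg (by omega), coeff_sqh, if_pos (by omega : 2 ∣ m - 1), coeff_Od]
    have : 2 * ((m-1)/2) + 1 = m := by omega
    rw [this, zero_add]

lemma rescale_decomp (f : A) : rescale (-1 : ℚ) f = sqh (Ev f) - X * sqh (Od f) := by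
  ext m
  rw [map_sub, coeff_rescale, coeff_sqh, coeff_X_mul']
  rcases Nat.even_or_odd m with ⟨j, hj⟩ | ⟨j, hj⟩
  · have h1 : 2 ∣ m := by omega
    have hm1 : (-1 : ℚ)^m = 1 := by
      have : m = 2*j := by omega
      rw [this, pow_mul]; norm_num
    rw [if_pos h1, coeff_Ev, hm1, one_mul]
    rcases Nat.eq_zero_or_pos m with h | h
    · simp [h]
    · rw [if_neg (by omega), coeff_sqh, if_neg (by omega)]
      have : 2 * (m/2) = m := by omega
      rw [this, sub_zero]
  · have h1 : ¬ 2 ∣ m := by omega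
    have hm1 : (-1 : ℚ)^m = -1 := by
      have : m = 2*j+1 := by omega
      rw [this, pow_succ, pow_mul]; norm_num
    rw [if_neg h1, if_neg (by omega), coeff_sqh, if_pos (by omega : 2 ∣ m - 1), coeff_Od, hm1]
    have : 2 * ((m-1)/2) + 1 = m := by omega
    rw [this, zero_sub, neg_one_mul]

lemma od_extract (f : A) : 2 * X * sqh (Od f) = f - rescale (-1 : ℚ) f := by
  rw [rescale_decomp]
  nth_rewrite 2 [decomp f]
  ring

lemma rescale_sqh (f : A) : rescale (-1 : ℚ) (sqh f) = sqh f := by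
  ext m
  rw [coeff_rescale, coeff_sqh]
  rcases Nat.even_or_odd m with ⟨j, hj⟩ | ⟨j, hj⟩
  · have hm1 : (-1 : ℚ)^m = 1 := by
      have : m = 2*j := by omega
      rw [this, pow_mul]; norm_num
    rw [hm1, one_mul]
  · have h1 : ¬ 2 ∣ m := by omega
    rw [if_neg h1, mul_zero]


/-! ### truncated products and the congruence relation -/

/-- finite q-Pochhammer-type product -/
def Pf (a c M : ℕ) : A := ∏ i ∈ range M, (1 - (X : A) ^ (a + c * i))

/-- congruence mod `X^N` -/
def MD (N : ℕ) (f g : A) : Prop := (X : A)^N ∣ f - g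

lemma MD.refl (N : ℕ) (f : A) : MD N f f := by simp [MD]

lemma MD.symm {N : ℕ} {f g : A} (h : MD N f g) : MD N g f := by
  rw [MD, ← neg_sub f g]
  exact dvd_neg.mpr h

lemma MD.trans {N : ℕ} {f g h : A} (h1 : MD N f g) (h2 : MD N g h) : MD N f h := by
  have := dvd_add h1 h2
  simpa [MD, sub_add_sub_cancel] using this

instance {N : ℕ} : Trans (MD N) (MD N) (MD N) := ⟨MD.trans⟩

lemma MD.mul {N : ℕ} {f g f' g' : A} (h : MD N f g) (h' : MD N f' g') :
    MD N (f * f') (g * g') := by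
  have key : f * f' - g * g' = f * (f' - g') + (f - g) * g' := by ring
  rw [MD, key]
  exact dvd_add (Dvd.dvd.mul_left h' f) (Dvd.dvd.mul_right h g')

lemma MD.add {N : ℕ} {f g f' g' : A} (h : MD N f g) (h' : MD N f' g') :
    MD N (f + f') (g + g') := by
  have key : f + f' - (g + g') = (f - g) + (f' - g') := by ring
  rw [MD, key]
  exact dvd_add h h'

lemma MD.of_eq {N : ℕ} {f g : A} (h : f = g) : MD N f g := by simp [MD, h]

lemma MD.pow {N : ℕ} {f g : A} (h : MD N f g) : ∀ p : ℕ, MD N (f^p) (g^p)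
  | 0 => by simpa using MD.refl N 1
  | p+1 => by
      rw [pow_succ, pow_succ]
      exact (MD.pow h p).mul h

lemma X_pow_dvd_prod_sub_one {ι : Type} {S : Finset ι} {e : ι → ℕ} {N : ℕ}
    (h : ∀ i ∈ S, N ≤ e i) : (X : A)^N ∣ (∏ i ∈ S, (1 - (X:A)^(e i))) - 1 := by
  classical
  induction S using Finset.cons_induction with
  | empty => simp
  | cons a S ha ih =>
      rw [Finset.prod_cons]
      have h1 : (X:A)^N ∣ (∏ i ∈ S, (1 - (X:A)^(e i))) - 1 :=
        ih (fun i hi => h i (Finset.mem_cons_of_mem hi))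
      have h2 : (X:A)^N ∣ (X:A)^(e a) :=
        pow_dvd_pow _ (h a (Finset.mem_cons_self _ _))
      have key : (1 - (X:A)^(e a)) * (∏ i ∈ S, (1 - (X:A)^(e i))) - 1 =
          ((∏ i ∈ S, (1 - (X:A)^(e i))) - 1) -
          (X:A)^(e a) * (∏ i ∈ S, (1 - (X:A)^(e i))) := by ring
      rw [key]
      exact dvd_sub h1 (h2.mul_right _)

lemma MD_Pf_Pf {a c M M' N : ℕ} (hMM' : M ≤ M') (hN : N ≤ a + c*M) :
    MD N (Pf a c M') (Pf a c M) := by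
  rw [MD, Pf, Pf, ← Finset.prod_range_mul_prod_Ico _ hMM']
  have key : (∏ i ∈ range M, (1 - (X:A)^(a + c*i))) * (∏ i ∈ Finset.Ico M M', (1 - (X:A)^(a + c*i)))
      - (∏ i ∈ range M, (1 - (X:A)^(a + c*i)))
      = (∏ i ∈ range M, (1 - (X:A)^(a + c*i))) *
        ((∏ i ∈ Finset.Ico M M', (1 - (X:A)^(a + c*i))) - 1) := by ring
  rw [key]
  apply Dvd.dvd.mul_left
  apply X_pow_dvd_prod_sub_one
  intro i hi
  have : M ≤ i := (Finset.mem_Ico.mp hi).1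
  have : c * M ≤ c * i := Nat.mul_le_mul_left c this
  omega

lemma coeff_qp (a c n : ℕ) : coeff n (qp a c) = coeff n (Pf a c (n+1)) := by
  rw [qp, coeff_mk, Pf]

lemma MD_zero_coeff {N : ℕ} {f : A} (h : (X:A)^N ∣ f) {m : ℕ} (hm : m < N) :
    coeff m f = 0 := by
  rw [PowerSeries.X_pow_dvd_iff] at h
  exact h m hm

lemma MD_qp_Pf {a c : ℕ} (ha : 1 ≤ a) (hc : 1 ≤ c) {N M : ℕ} (hN : N ≤ a + c*M) :
    MD N (qp a c) (Pf a c M) := by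
  rw [MD, PowerSeries.X_pow_dvd_iff]
  intro m hm
  rw [map_sub, coeff_qp, sub_eq_zero]
  rcases le_total (m+1) M with h | h
  · have : MD (m+1) (Pf a c M) (Pf a c (m+1)) :=
      MD_Pf_Pf h (by have h2 : (m+1) ≤ c*(m+1) := Nat.le_mul_of_pos_left _ hc; omega)
    have h0 := MD_zero_coeff this (Nat.lt_succ_self m)
    rw [map_sub, sub_eq_zero] at h0
    exact h0.symm
  · have : MD (m+1) (Pf a c (m+1)) (Pf a c M) := MD_Pf_Pf h (by omega)
    have h0 := MD_zero_coeff this (Nat.lt_succ_self m)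
    rw [map_sub, sub_eq_zero] at h0
    exact h0

lemma eq_of_MD_all {f g : A} (h : ∀ N, MD N f g) : f = g := by
  ext m
  have h0 := MD_zero_coeff (h (m+1)) (Nat.lt_succ_self m)
  rw [map_sub, sub_eq_zero] at h0
  exact h0

lemma constantCoeff_Pf {a c M : ℕ} (ha : 1 ≤ a) : constantCoeff (Pf a c M) = 1 := by
  rw [Pf, map_prod]
  apply Finset.prod_eq_one
  intro i _
  rw [map_sub, map_one, map_pow, constantCoeff_X, zero_pow (by omega), sub_zero]

lemma constantCoeff_qp {a c : ℕ} (ha : 1 ≤ a) : constantCoeff (qp a c) = 1 := by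
  have := coeff_qp a c 0
  rw [coeff_zero_eq_constantCoeff] at this
  rw [this, constantCoeff_Pf ha]

lemma qp_ne_zero {a c : ℕ} (ha : 1 ≤ a) : qp a c ≠ 0 := by
  intro h
  have := constantCoeff_qp (c := c) ha
  rw [h, map_zero] at this
  norm_num at this

lemma qp_mul_inv {a c : ℕ} (ha : 1 ≤ a) : qp a c * (qp a c)⁻¹ = 1 :=
  PowerSeries.mul_inv_cancel _ (by rw [constantCoeff_qp ha]; norm_num)

/-- cancel a unit in a congruence -/
lemma MD.cancel {N : ℕ} {f g u : A} (hu : constantCoeff u ≠ 0)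
    (h : MD N (f * u) (g * u)) : MD N f g := by
  rw [MD] at h ⊢
  have key : f - g = ((f*u) - (g*u)) * u⁻¹ := by
    have h2 : u * u⁻¹ = 1 := PowerSeries.mul_inv_cancel _ hu
    calc f - g = (f - g) * (u * u⁻¹) := by rw [h2, mul_one]
    _ = ((f*u) - (g*u)) * u⁻¹ := by ring
  rw [key]
  exact h.mul_right _

lemma two_ne_zero' : (2 : A) ≠ 0 := by
  intro h
  have := congrArg (constantCoeff) h
  simp only [map_ofNat, map_zero] at this
  norm_num at this

/-! ### parity splitting of products -/

lemma Pf_split (a c M : ℕ) : Pf a c (2*M) = Pf a (2*c) M * Pf (a+c) (2*c) M := by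
  induction M with
  | zero => simp [Pf]
  | succ M ih =>
      have h1 : 2*(M+1) = (2*M) + 1 + 1 := by ring
      rw [h1]
      simp only [Pf] at ih ⊢
      rw [Finset.prod_range_succ, Finset.prod_range_succ, ih,
        Finset.prod_range_succ (f := fun i => 1 - (X:A)^(a + 2*c*i)),
        Finset.prod_range_succ (f := fun i => 1 - (X:A)^((a+c) + 2*c*i))]
      have e1 : a + c * (2*M) = a + 2*c*M := by ring
      have e2 : a + c * (2*M+1) = (a+c) + 2*c*M := by ring
      rw [e1, e2]
      ring

lemma qp_split {a c : ℕ} (ha : 1 ≤ a) (hc : 1 ≤ c) :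
    qp a c = qp a (2*c) * qp (a+c) (2*c) := by
  apply eq_of_MD_all
  intro N
  have t1 : MD N (qp a c) (Pf a c (2*N)) := MD_qp_Pf ha hc (by nlinarith)
  have t2 : MD N (qp a (2*c) * qp (a+c) (2*c)) (Pf a (2*c) N * Pf (a+c) (2*c) N) :=
    (MD_qp_Pf ha (by omega) (by nlinarith)).mul
      (MD_qp_Pf (by omega) (by omega) (by nlinarith))
  exact (t1.trans (MD.of_eq (Pf_split a c N))).trans t2.symm

/-! ### sqh and rescale acting on qp products -/

lemma sqh_X_pow (e : ℕ) : sqh ((X:A)^e) = X^(2*e) := by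
  rw [map_pow, sqh_X, ← pow_mul, mul_comm]

lemma sqh_Pf (a c M : ℕ) : sqh (Pf a c M) = Pf (2*a) (2*c) M := by
  rw [Pf, Pf, map_prod]
  apply Finset.prod_congr rfl
  intro i _
  rw [map_sub, map_one, sqh_X_pow]
  have e1 : 2*(a + c*i) = 2*a + 2*c*i := by ring
  rw [e1]

lemma MD_sqh {N : ℕ} {f g : A} (h : MD N f g) : MD N (sqh f) (sqh g) := by
  obtain ⟨d, hd⟩ := h
  rw [MD, ← map_sub, hd, map_mul, sqh_X_pow]
  exact Dvd.dvd.mul_right (pow_dvd_pow _ (by omega)) _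

lemma sqh_qp {a c : ℕ} (ha : 1 ≤ a) (hc : 1 ≤ c) : sqh (qp a c) = qp (2*a) (2*c) := by
  apply eq_of_MD_all
  intro N
  have t1 : MD N (sqh (qp a c)) (Pf (2*a) (2*c) N) := by
    rw [← sqh_Pf]
    exact MD_sqh (MD_qp_Pf ha hc (by nlinarith))
  exact t1.trans (MD_qp_Pf (by omega) (by omega) (by nlinarith)).symm

lemma MD_rescale {N : ℕ} {f g : A} (h : MD N f g) :
    MD N (rescale (-1 : ℚ) f) (rescale (-1 : ℚ) g) := by
  obtain ⟨d, hd⟩ := h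
  rw [MD, ← map_sub, hd, map_mul, map_pow, rescale_neg_one_X, neg_pow]
  exact (dvd_mul_left _ _).mul_right _

lemma r_Pf_even {a c : ℕ} (ha : 2 ∣ a) (hc : 2 ∣ c) (M : ℕ) :
    rescale (-1 : ℚ) (Pf a c M) = Pf a c M := by
  rw [Pf, map_prod]
  apply Finset.prod_congr rfl
  intro i _
  rw [map_sub, map_one, map_pow, rescale_neg_one_X]
  obtain ⟨a', rfl⟩ := ha
  obtain ⟨c', rfl⟩ := hc
  have h2 : 2 ∣ (2*a' + 2*c' * i) := ⟨a' + c'*i, by ring⟩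
  obtain ⟨j, hj⟩ := h2
  rw [hj, pow_mul, neg_pow, pow_mul]
  norm_num

lemma r_qp_even {a c : ℕ} (ha : 2 ∣ a) (hc : 2 ∣ c) (ha1 : 1 ≤ a) (hc1 : 1 ≤ c) :
    rescale (-1 : ℚ) (qp a c) = qp a c := by
  apply eq_of_MD_all
  intro N
  have t1 : MD N (rescale (-1:ℚ) (qp a c)) (rescale (-1:ℚ) (Pf a c N)) :=
    MD_rescale (MD_qp_Pf ha1 hc1 (by nlinarith))
  rw [r_Pf_even ha hc N] at t1
  exact t1.trans (MD_qp_Pf ha1 hc1 (by nlinarith)).symm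

lemma r_Pf12 (M : ℕ) :
    rescale (-1 : ℚ) (Pf 1 2 M) = ∏ i ∈ range M, (1 + (X:A)^(1+2*i)) := by
  rw [Pf, map_prod]
  apply Finset.prod_congr rfl
  intro i _
  rw [map_sub, map_one, map_pow, rescale_neg_one_X]
  have h2 : (-(X:A))^(1+2*i) = -(X^(1+2*i)) := by
    rw [neg_pow]
    have : (-1 : A)^(1+2*i) = -1 := by
      rw [pow_add, pow_mul]
      norm_num
    rw [this]
    ring
  rw [h2, sub_neg_eq_add]

lemma pair_prod (e : ℕ → ℕ) (M : ℕ) :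
    (∏ i ∈ range M, (1 + (X:A)^(e i))) * (∏ i ∈ range M, (1 - X^(e i))) =
      ∏ i ∈ range M, (1 - X^(2 * e i)) := by
  rw [← Finset.prod_mul_distrib]
  apply Finset.prod_congr rfl
  intro i _
  have : (X:A)^(2 * e i) = X^(e i) * X^(e i) := by rw [two_mul, pow_add]
  rw [this]
  ring

lemma r_qp12_mul : rescale (-1 : ℚ) (qp 1 2) * qp 1 2 = qp 2 4 := by
  apply eq_of_MD_all
  intro N
  have t1 : MD N (rescale (-1:ℚ) (qp 1 2)) (rescale (-1:ℚ) (Pf 1 2 N)) :=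
    MD_rescale (MD_qp_Pf (by omega) (by omega) (by omega))
  have t2 : MD N (qp 1 2) (Pf 1 2 N) := MD_qp_Pf (by omega) (by omega) (by omega)
  have t3 := t1.mul t2
  have e1 : rescale (-1:ℚ) (Pf 1 2 N) * Pf 1 2 N = Pf 2 4 N := by
    rw [r_Pf12, Pf, Pf]
    have e2 : ∀ i, 2 + 4*i = 2*(1+2*i) := by intro i; ring
    calc (∏ i ∈ range N, (1 + (X:A)^(1+2*i))) * (∏ i ∈ range N, (1 - X^(1+2*i)))
        = ∏ i ∈ range N, (1 - X^(2*(1+2*i))) := pair_prod _ N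
      _ = ∏ i ∈ range N, (1 - X^(2+4*i)) := by
          apply Finset.prod_congr rfl
          intro i _
          rw [e2 i]
  exact (t3.trans (MD.of_eq e1)).trans (MD_qp_Pf (by omega) (by omega) (by omega)).symm

lemma rescale_rescale_neg (f : A) :
    rescale (-1 : ℚ) (rescale (-1 : ℚ) f) = f := by
  rw [PowerSeries.rescale_rescale]
  norm_num

/-! ### Gaussian binomial machinery -/

def bb (s : ℕ) : ℕ → ℕ → A
  | _, 0 => 1
  | 0, _+1 => 0
  | m+1, k+1 => bb s m (k+1) + X^(s*(m - k)) * bb s m k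

lemma bb_zero (s m : ℕ) : bb s m 0 = 1 := by cases m <;> rfl

lemma bb_succ_succ (s m k : ℕ) :
    bb s (m+1) (k+1) = bb s m (k+1) + X^(s*(m - k)) * bb s m k := rfl

lemma bb_eq_zero (s : ℕ) : ∀ m k, m < k → bb s m k = 0
  | 0, _+1, _ => rfl
  | m+1, k+1, h => by
      rw [bb_succ_succ, bb_eq_zero s m (k+1) (by omega), bb_eq_zero s m k (by omega)]
      simp

lemma bb_self (s : ℕ) : ∀ m, bb s m m = 1
  | 0 => rfl
  | m+1 => by
      rw [bb_succ_succ, bb_eq_zero s m (m+1) (by omega), bb_self s m]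
      simp

lemma bb_succ (s m k : ℕ) :
    bb s (m+1) k = bb s m k + (if k = 0 then 0 else X^(s*(m+1-k)) * bb s m (k-1)) := by
  cases k with
  | zero => rw [bb_zero, bb_zero, if_pos rfl, add_zero]
  | succ k =>
      rw [bb_succ_succ, if_neg (Nat.succ_ne_zero k)]
      have e1 : m + 1 - (k+1) = m - k := by omega
      have e2 : k + 1 - 1 = k := by omega
      rw [e1, e2]

lemma bb_prod (s : ℕ) : ∀ m j k, m = j + k →
    bb s m k * (Pf s s k * Pf s s j) = Pf s s m := by
  intro m
  induction m with
  | zero =>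
      intro j k h
      have hj : j = 0 := by omega
      have hk : k = 0 := by omega
      subst hj; subst hk
      simp [Pf, bb_zero]
  | succ m ih =>
      intro j k h
      cases k with
      | zero =>
          have hj : j = m + 1 := by omega
          subst hj
          simp [Pf, bb_zero]
      | succ k =>
          cases j with
          | zero =>
              have hk : k + 1 = m + 1 := by omega
              rw [hk, bb_self]
              simp [Pf]
          | succ j =>
              have hm : m = j + (k+1) := by omega
              have hm' : m = (j+1) + k := by omega
              have ih1 := ih (j) (k+1) hm
              have ih2 := ih (j+1) k hm'
              rw [bb_succ_succ]
              have e0 : m - k = j + 1 := by omega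
              rw [e0]
              have ePfk : Pf s s (k+1) = Pf s s k * (1 - X^(s + s*k)) :=
                Finset.prod_range_succ _ k
              have ePfj : Pf s s (j+1) = Pf s s j * (1 - X^(s + s*j)) :=
                Finset.prod_range_succ _ j
              have ePfm : Pf s s (m+1) = Pf s s m * (1 - X^(s + s*m)) :=
                Finset.prod_range_succ _ m
              have eexp : s + s*m = (s*(j+1)) + (s + s*k) := by
                subst hm; ring
              rw [ePfk] at ih1
              rw [ePfj] at ih2
              rw [ePfk, ePfj, ePfm, eexp, pow_add]
              linear_combination (1 - (X:A)^(s+s*j)) * ih1 +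
                (X:A)^(s*(j+1)) * (1 - (X:A)^(s+s*k)) * ih2

/-- partial sums of exponent steps -/
def sg (s k : ℕ) : ℕ := ∑ i ∈ range k, (1 + s*i)

lemma sg_succ (s k : ℕ) : sg s (k+1) = sg s k + (1 + s*k) := Finset.sum_range_succ _ k

lemma sg_two (n : ℕ) : sg 2 n = n*n := by
  induction n with
  | zero => simp [sg]
  | succ n ih => rw [sg_succ, ih]; ring

lemma sg_one_two (n : ℕ) : 2 * sg 1 n = n*n + n := by
  induction n with
  | zero => simp [sg]
  | succ n ih => rw [sg_succ, Nat.mul_add, ih]; ring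

lemma sg_le (n : ℕ) : n ≤ sg 1 n := by
  have h : 2*n ≤ 2 * sg 1 n := by rw [sg_one_two]; nlinarith
  omega

/-! ### the reversed q-binomial theorem -/

lemma revQBT (s : ℕ) : ∀ m : ℕ,
    ∏ i ∈ range m, (Polynomial.X + Polynomial.C ((X:A)^(1+s*i)))
      = ∑ k ∈ range (m+1), Polynomial.C (bb s m k * X^(sg s k)) * Polynomial.X^(m-k) := by
  intro m
  induction m with
  | zero => simp [sg, bb_zero]
  | succ m ih =>
      rw [Finset.prod_range_succ, ih]
      have hr : ∀ k ∈ range (m+2),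
          Polynomial.C (bb s (m+1) k * X^(sg s k)) * Polynomial.X^(m+1-k)
          = Polynomial.C (bb s m k * X^(sg s k)) * Polynomial.X^(m+1-k)
            + Polynomial.C ((if k = 0 then (0:A) else X^(s*(m+1-k)) * bb s m (k-1))
                * X^(sg s k)) * Polynomial.X^(m+1-k) := by
        intro k _
        rw [bb_succ, add_mul, map_add, add_mul]
      rw [Finset.sum_congr rfl hr, Finset.sum_add_distrib]
      -- first summand
      have h1 : ∑ k ∈ range (m+2),
          Polynomial.C (bb s m k * X^(sg s k)) * Polynomial.X^(m+1-k)
          = ∑ k ∈ range (m+1),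
            (Polynomial.C (bb s m k * X^(sg s k)) * Polynomial.X^(m-k)) * Polynomial.X := by
        rw [Finset.sum_range_succ, bb_eq_zero s m (m+1) (by omega)]
        simp only [zero_mul, map_zero, add_zero]
        apply Finset.sum_congr rfl
        intro k hk
        simp only [Finset.mem_range] at hk
        have e1 : m + 1 - k = (m - k) + 1 := by omega
        rw [e1, pow_succ, mul_assoc]
      -- second summand
      have h2 : ∑ k ∈ range (m+2),
          Polynomial.C ((if k = 0 then (0:A) else X^(s*(m+1-k)) * bb s m (k-1))
            * X^(sg s k)) * Polynomial.X^(m+1-k)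
          = ∑ k ∈ range (m+1),
            (Polynomial.C (bb s m k * X^(sg s k)) * Polynomial.X^(m-k))
              * Polynomial.C ((X:A)^(1+s*m)) := by
        rw [Finset.sum_range_succ']
        have e0 : (if (0:ℕ) = 0 then (0:A) else X ^ (s * (m + 1 - 0)) * bb s m (0 - 1)) = 0 :=
          if_pos rfl
        rw [e0, zero_mul, map_zero, zero_mul, add_zero]
        apply Finset.sum_congr rfl
        intro k hk
        simp only [Finset.mem_range] at hk
        rw [if_neg (Nat.succ_ne_zero k)]
        have e1 : m + 1 - (k+1) = m - k := by omega
        have e2 : k + 1 - 1 = k := by omega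
        rw [e1, e2]
        have he : s*(m-k) + sg s (k+1) = sg s k + (1+s*m) := by
          rw [sg_succ]
          obtain ⟨d, rfl⟩ := Nat.le.dest (by omega : k ≤ m)
          have e5 : k + d - k = d := by omega
          rw [e5]
          ring
        have hx : (X:A)^(s*(m-k)) * bb s m k * X^(sg s (k+1))
            = bb s m k * X^(sg s k) * X^(1+s*m) := by
          rw [mul_comm ((X:A)^(s*(m-k))) (bb s m k), mul_assoc, ← pow_add, he, pow_add,
            ← mul_assoc]
        rw [hx, map_mul, map_mul]
        ring
      rw [h1, h2, mul_add]
      rw [Finset.sum_mul, Finset.sum_mul]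

/-! ### the two finite theta identities -/

def w (n k : ℕ) : ℕ := (n-k)*(n-k) + (k-n)*(k-n)

def v (n k : ℕ) : ℕ := if n ≤ k then sg 1 (k-n) else sg 1 (n-k-1)

lemma X_pow_ne_zero (e : ℕ) : (X:A)^e ≠ 0 :=
  pow_ne_zero e PowerSeries.X_ne_zero

lemma sum_sg_two (n : ℕ) : ∑ i ∈ range n, (1+2*i) = n*n := by
  have h := sg_two n
  unfold sg at h
  exact h

lemma sum_sg_one (n : ℕ) : ∑ i ∈ range n, (1+1*i) = sg 1 n := rfl

lemma A_fin (n : ℕ) :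
    (∏ j ∈ range n, (1 + (X:A)^(1+2*j)))^2
      = ∑ k ∈ range (2*n+1), bb 2 (2*n) k * X^(w n k) := by
  have h := congrArg (Polynomial.eval ((X:A)^(2*n))) (revQBT 2 (2*n))
  rw [Polynomial.eval_prod, Polynomial.eval_finset_sum] at h
  simp only [Polynomial.eval_add, Polynomial.eval_mul, Polynomial.eval_pow,
    Polynomial.eval_X, Polynomial.eval_C] at h
  have hL : ∏ i ∈ range (2*n), (((X:A)^(2*n)) + X^(1+2*i))
      = X^(3*(n*n)) * (∏ j ∈ range n, (1 + (X:A)^(1+2*j)))^2 := by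
    have h2 : 2*n = n + n := by ring
    rw [h2, Finset.prod_range_add]
    have hA : ∀ i ∈ range n, ((X:A)^(n+n) + X^(1+2*i))
        = X^(1+2*i) * (1 + X^(1+2*(n-1-i))) := by
      intro i hi
      simp only [Finset.mem_range] at hi
      have e1 : n+n = (1+2*i) + (1+2*(n-1-i)) := by omega
      rw [e1, pow_add]
      ring
    have hB : ∀ i ∈ range n, ((X:A)^(n+n) + X^(1+2*(n+i)))
        = X^(n+n) * (1 + X^(1+2*i)) := by
      intro i _
      have e1 : 1+2*(n+i) = (n+n) + (1+2*i) := by omega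
      rw [e1, pow_add]
      ring
    rw [Finset.prod_congr rfl hA, Finset.prod_congr rfl hB,
      Finset.prod_mul_distrib, Finset.prod_mul_distrib,
      Finset.prod_pow_eq_pow_sum, Finset.prod_const, Finset.card_range,
      Finset.prod_range_reflect (fun j => 1 + (X:A)^(1+2*j)) n, sum_sg_two]
    ring
  have hR : ∀ k ∈ range (2*n+1),
      bb 2 (2*n) k * X^(sg 2 k) * ((X:A)^(2*n))^(2*n-k)
        = X^(3*(n*n)) * (bb 2 (2*n) k * X^(w n k)) := by
    intro k hk
    simp only [Finset.mem_range] at hk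
    rw [← pow_mul, mul_assoc, ← pow_add, sg_two]
    have he : k*k + 2*n*(2*n-k) = 3*(n*n) + w n k := by
      rcases le_total n k with hnk | hnk
      · obtain ⟨d, rfl⟩ := Nat.le.dest hnk
        have hd : d ≤ n := by omega
        obtain ⟨e, rfl⟩ := Nat.le.dest hd
        simp only [w]
        have e1 : d+e - (d+e+d) = 0 := by omega
        have e2 : d+e+d - (d+e) = d := by omega
        have e3 : 2*(d+e) - (d+e+d) = e := by omega
        rw [e1, e2, e3]
        ring
      · obtain ⟨d, rfl⟩ := Nat.le.dest hnk
        simp only [w]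
        have e1 : k+d - k = d := by omega
        have e2 : k - (k+d) = 0 := by omega
        have e3 : 2*(k+d) - k = k + 2*d := by omega
        rw [e1, e2, e3]
        ring
    rw [he, pow_add]
    ring
  rw [hL, Finset.sum_congr rfl hR, ← Finset.mul_sum] at h
  exact mul_left_cancel₀ (X_pow_ne_zero _) h

lemma B_fin (n : ℕ) :
    (∏ j ∈ range n, (1 + (X:A)^j)) * (∏ j ∈ range n, (1 + (X:A)^(1+1*j)))
      = ∑ k ∈ range (2*n+1), bb 1 (2*n) k * X^(v n k) := by
  have h := congrArg (Polynomial.eval ((X:A)^n)) (revQBT 1 (2*n))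
  rw [Polynomial.eval_prod, Polynomial.eval_finset_sum] at h
  simp only [Polynomial.eval_add, Polynomial.eval_mul, Polynomial.eval_pow,
    Polynomial.eval_X, Polynomial.eval_C] at h
  have hL : ∏ i ∈ range (2*n), (((X:A)^n) + X^(1+1*i))
      = X^(sg 1 n + n*n) *
        ((∏ j ∈ range n, (1 + (X:A)^j)) * (∏ j ∈ range n, (1 + (X:A)^(1+1*j)))) := by
    have h2 : 2*n = n + n := by ring
    rw [h2, Finset.prod_range_add]
    have hA : ∀ i ∈ range n, ((X:A)^n + X^(1+1*i))
        = X^(1+1*i) * (1 + X^(n-1-i)) := by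
      intro i hi
      simp only [Finset.mem_range] at hi
      have e1 : (X:A)^n = X^(1+1*i) * X^(n-1-i) := by
        rw [← pow_add]
        congr 1
        omega
      rw [e1]
      ring
    have hB : ∀ i ∈ range n, ((X:A)^n + X^(1+1*(n+i)))
        = X^n * (1 + X^(1+1*i)) := by
      intro i _
      have e1 : 1+1*(n+i) = n + (1+1*i) := by omega
      rw [e1, pow_add]
      ring
    rw [Finset.prod_congr rfl hA, Finset.prod_congr rfl hB,
      Finset.prod_mul_distrib, Finset.prod_mul_distrib,
      Finset.prod_pow_eq_pow_sum, Finset.prod_const, Finset.card_range,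
      Finset.prod_range_reflect (fun j => 1 + (X:A)^j) n, sum_sg_one]
    ring
  have hR : ∀ k ∈ range (2*n+1),
      bb 1 (2*n) k * X^(sg 1 k) * ((X:A)^n)^(2*n-k)
        = X^(sg 1 n + n*n) * (bb 1 (2*n) k * X^(v n k)) := by
    intro k hk
    simp only [Finset.mem_range] at hk
    rw [← pow_mul, mul_assoc, ← pow_add]
    have he : sg 1 k + n*(2*n-k) = (sg 1 n + n*n) + v n k := by
      apply Nat.eq_of_mul_eq_mul_left (show 0 < 2 by norm_num)
      rcases Nat.lt_or_ge k n with hlt | hge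
      · have hv : v n k = sg 1 (n-k-1) := if_neg (by omega)
        rw [hv]
        obtain ⟨d, rfl⟩ : ∃ d, n = k + 1 + d := ⟨n - k - 1, by omega⟩
        have e1 : k+1+d - k - 1 = d := by omega
        have e2 : 2*(k+1+d) - k = k + 2 + 2*d := by omega
        rw [e1, e2]
        have g1 := sg_one_two k
        have g2 := sg_one_two (k+1+d)
        have g3 := sg_one_two d
        zify at g1 g2 g3 ⊢
        linear_combination g1 - g2 - g3
      · have hv : v n k = sg 1 (k-n) := if_pos hge
        rw [hv]
        obtain ⟨d, rfl⟩ := Nat.le.dest hge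
        have hd : d ≤ n := by omega
        have e1 : n + d - n = d := by omega
        have e2 : 2*n - (n+d) = n - d := by omega
        rw [e1, e2]
        obtain ⟨e, rfl⟩ := Nat.le.dest hd
        have e3 : d + e - d = e := by omega
        rw [e3]
        have g1 := sg_one_two (d+e+d)
        have g2 := sg_one_two (d+e)
        have g3 := sg_one_two d
        zify at g1 g2 g3 ⊢
        linear_combination g1 - g2 - g3
    rw [he, pow_add]
    ring
  rw [hL, Finset.sum_congr rfl hR, ← Finset.mul_sum] at h
  exact mul_left_cancel₀ (X_pow_ne_zero _) h

/-! ### theta series and limit identities -/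

/-- `φ(q) = 1 + 2∑ q^{t²}` -/
def phip : A := PowerSeries.mk fun m =>
  if Nat.sqrt m * Nat.sqrt m = m then (if m = 0 then 1 else 2) else 0

/-- `ψ(q) = ∑ q^{t(t+1)/2}` -/
def psis : A := PowerSeries.mk fun m =>
  if Nat.sqrt (8*m+1) * Nat.sqrt (8*m+1) = 8*m+1 then 1 else 0

lemma w_succ (n k : ℕ) : w (n+1) (k+1) = w n k := by
  simp only [w]
  have e1 : n+1-(k+1) = n-k := by omega
  have e2 : k+1-(n+1) = k-n := by omega
  rw [e1, e2]

lemma w_sum : ∀ n : ℕ, ∑ k ∈ range (2*n+1), (X:A)^(w n k)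
    = 1 + 2*∑ j ∈ range n, (X:A)^((j+1)*(j+1)) := by
  intro n
  induction n with
  | zero => simp [w]
  | succ n ih =>
      have h1 : 2*(n+1)+1 = (2*n+1) + 1 + 1 := by ring
      rw [h1, Finset.sum_range_succ', Finset.sum_range_succ]
      have e0 : w (n+1) 0 = (n+1)*(n+1) := by simp [w]
      have e2 : w (n+1) (2*n+1+1) = (n+1)*(n+1) := by
        simp only [w]
        have a1 : n+1-(2*n+1+1) = 0 := by omega
        have a2 : 2*n+1+1-(n+1) = n+1 := by omega
        rw [a1, a2]
        ring
      have e3 : ∀ k ∈ range (2*n+1), (X:A)^(w (n+1) (k+1)) = (X:A)^(w n k) := by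
        intro k _
        rw [w_succ]
      rw [e0, e2, Finset.sum_congr rfl e3, ih, Finset.sum_range_succ]
      ring

lemma v_succ (n k : ℕ) : v (n+1) (k+1) = v n k := by
  simp only [v]
  rcases le_or_gt n k with h | h
  · rw [if_pos (by omega), if_pos h]
    have e1 : k+1-(n+1) = k-n := by omega
    rw [e1]
  · rw [if_neg (by omega), if_neg (by omega)]
    have e1 : n+1-(k+1)-1 = n-k-1 := by omega
    rw [e1]

lemma v_sum : ∀ n : ℕ, ∑ k ∈ range (2*n+1), (X:A)^(v n k)
    = 2*∑ j ∈ range n, (X:A)^(sg 1 j) + (X:A)^(sg 1 n) := by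
  intro n
  induction n with
  | zero => simp [v]
  | succ n ih =>
      have h1 : 2*(n+1)+1 = (2*n+1) + 1 + 1 := by ring
      rw [h1, Finset.sum_range_succ', Finset.sum_range_succ]
      have e0 : v (n+1) 0 = sg 1 n := by
        simp only [v]
        rw [if_neg (by omega)]
        have e1 : n+1-0-1 = n := by omega
        rw [e1]
      have e2 : v (n+1) (2*n+1+1) = sg 1 (n+1) := by
        simp only [v]
        rw [if_pos (by omega)]
        have e1 : 2*n+1+1-(n+1) = n+1 := by omega
        rw [e1]
      have e3 : ∀ k ∈ range (2*n+1), (X:A)^(v (n+1) (k+1)) = (X:A)^(v n k) := by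
        intro k _
        rw [v_succ]
      rw [e0, e2, Finset.sum_congr rfl e3, ih, Finset.sum_range_succ]
      ring

lemma coeff_two_mul (m : ℕ) (f : A) : coeff m (2 * f) = 2 * coeff m f := by
  have h2 : (2:A) = C 2 := by
    rw [map_ofNat]
  rw [h2, coeff_C_mul]

lemma phip_approx {N n : ℕ} (h : N ≤ n) :
    MD N phip (1 + 2*∑ j ∈ range n, (X:A)^((j+1)*(j+1))) := by
  rw [MD, PowerSeries.X_pow_dvd_iff]
  intro m hm
  rw [map_sub, sub_eq_zero, map_add, coeff_two_mul, map_sum]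
  have hterm : ∀ j ∈ range n, coeff m ((X:A)^((j+1)*(j+1)))
      = if m = (j+1)*(j+1) then (1:ℚ) else 0 := fun j _ => PowerSeries.coeff_X_pow m _
  rw [Finset.sum_congr rfl hterm, PowerSeries.coeff_one]
  rcases Nat.eq_zero_or_pos m with rfl | hm0
  · have hz : ∀ j ∈ range n, (if (0:ℕ) = (j+1)*(j+1) then (1:ℚ) else 0) = 0 := by
      intro j _
      rw [if_neg (by positivity)]
    rw [Finset.sum_congr rfl hz]
    have hco : coeff 0 phip = 1 := by
      rw [phip, coeff_mk, if_pos (by norm_num), if_pos rfl]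
    rw [hco]
    simp
  · rw [if_neg (by omega)]
    by_cases hsq : Nat.sqrt m * Nat.sqrt m = m
    · have hr1 : 1 ≤ Nat.sqrt m := by
        rcases Nat.eq_zero_or_pos (Nat.sqrt m) with h0 | h0
        · rw [h0] at hsq; omega
        · exact h0
      have hsum : ∑ j ∈ range n, (if m = (j+1)*(j+1) then (1:ℚ) else 0) = 1 := by
        rw [Finset.sum_eq_single_of_mem (Nat.sqrt m - 1)]
        · rw [if_pos]
          have e1 : Nat.sqrt m - 1 + 1 = Nat.sqrt m := by omega
          rw [e1, hsq]
        · rw [Finset.mem_range]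
          have := Nat.sqrt_le_self m
          omega
        · intro j _ hj
          rw [if_neg]
          intro hcon
          have : Nat.sqrt m = j+1 := by rw [hcon, Nat.sqrt_eq]
          omega
      have hco : coeff m phip = 2 := by
        rw [phip, coeff_mk, if_pos hsq, if_neg (by omega)]
      rw [hsum, hco]
      ring
    · have hsum : ∑ j ∈ range n, (if m = (j+1)*(j+1) then (1:ℚ) else 0) = 0 := by
        apply Finset.sum_eq_zero
        intro j _
        rw [if_neg]
        intro hcon
        apply hsq
        rw [hcon, Nat.sqrt_eq]
      have hco : coeff m phip = 0 := by
        rw [phip, coeff_mk, if_neg hsq]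
      rw [hsum, hco]
      ring

lemma tri_char (j : ℕ) : 8 * sg 1 j + 1 = (2*j+1)*(2*j+1) := by
  have h := sg_one_two j
  nlinarith [h]

lemma psis_approx {N n : ℕ} (h : N ≤ n) :
    MD N psis (∑ j ∈ range n, (X:A)^(sg 1 j)) := by
  rw [MD, PowerSeries.X_pow_dvd_iff]
  intro m hm
  rw [map_sub, sub_eq_zero, map_sum]
  have hterm : ∀ j ∈ range n, coeff m ((X:A)^(sg 1 j))
      = if m = sg 1 j then (1:ℚ) else 0 := fun j _ => PowerSeries.coeff_X_pow m _
  rw [Finset.sum_congr rfl hterm]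
  by_cases hsq : Nat.sqrt (8*m+1) * Nat.sqrt (8*m+1) = 8*m+1
  · set t := Nat.sqrt (8*m+1) with ht
    have htodd : ¬ (2 ∣ t) := by
      intro ⟨u, hu⟩
      rw [hu] at hsq
      have hx : (2*u)*(2*u) = 2*(2*(u*u)) := by ring
      omega
    have ht1 : 1 ≤ t := by
      rcases Nat.eq_zero_or_pos t with h0 | h0
      · rw [h0] at hsq; omega
      · exact h0
    have hj : t = 2*((t-1)/2)+1 := by omega
    set j := (t-1)/2 with hjj
    have hsgj : sg 1 j = m := by
      have h1 := tri_char j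
      have h2 : (2*j+1)*(2*j+1) = 8*m+1 := by rw [← hj]; exact hsq
      omega
    have hsum : ∑ i ∈ range n, (if m = sg 1 i then (1:ℚ) else 0) = 1 := by
      rw [Finset.sum_eq_single_of_mem j]
      · rw [if_pos hsgj.symm]
      · rw [Finset.mem_range]
        have := sg_le j
        omega
      · intro i _ hi
        rw [if_neg]
        intro hcon
        have h1 := tri_char i
        have h2 : 8*m+1 = (2*i+1)*(2*i+1) := by omega
        have h3 : Nat.sqrt (8*m+1) = 2*i+1 := by rw [h2, Nat.sqrt_eq]
        omega
    have hco : coeff m psis = 1 := by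
      rw [psis, coeff_mk, if_pos hsq]
    rw [hsum, hco]
  · have hsum : ∑ i ∈ range n, (if m = sg 1 i then (1:ℚ) else 0) = 0 := by
      apply Finset.sum_eq_zero
      intro i _
      rw [if_neg]
      intro hcon
      apply hsq
      have h1 := tri_char i
      have h2 : 8*m+1 = (2*i+1)*(2*i+1) := by omega
      rw [h2, Nat.sqrt_eq]
    have hco : coeff m psis = 0 := by
      rw [psis, coeff_mk, if_neg hsq]
    rw [hsum, hco]

/-! ### limits: the two Gauss identities -/

lemma bb_approx {s : ℕ} (hs : 1 ≤ s) {N m k : ℕ} (hk : N ≤ k) (hk2 : N ≤ m - k)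
    (hkm : k ≤ m) : MD N (bb s m k) ((qp s s)⁻¹) := by
  have hprod : bb s m k * (Pf s s k * Pf s s (m-k)) = Pf s s m :=
    bb_prod s m (m-k) k (by omega)
  have c1 : MD N (Pf s s k) (qp s s) :=
    (MD_qp_Pf hs hs (by nlinarith)).symm
  have c2 : MD N (Pf s s (m-k)) (qp s s) :=
    (MD_qp_Pf hs hs (by nlinarith)).symm
  have c3 : MD N (Pf s s m) (qp s s) :=
    (MD_qp_Pf hs hs (by nlinarith)).symm
  have t1 : MD N (bb s m k * (Pf s s k * Pf s s (m-k))) (bb s m k * (qp s s * qp s s)) :=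
    (MD.refl N _).mul (c1.mul c2)
  have t2 : MD N (bb s m k * (qp s s * qp s s)) (qp s s) :=
    (t1.symm.trans (MD.of_eq hprod)).trans c3
  have key : (qp s s)⁻¹ * (qp s s * qp s s) = qp s s := by
    have h2 : qp s s * (qp s s)⁻¹ = 1 := qp_mul_inv hs
    calc (qp s s)⁻¹ * (qp s s * qp s s) = (qp s s * (qp s s)⁻¹) * qp s s := by ring
    _ = qp s s := by rw [h2, one_mul]
  have t3 : MD N (bb s m k * (qp s s * qp s s)) ((qp s s)⁻¹ * (qp s s * qp s s)) :=
    t2.trans (MD.of_eq key.symm)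
  apply MD.cancel (u := qp s s * qp s s) _ t3
  rw [map_mul, constantCoeff_qp hs]
  norm_num

lemma le_sq (d : ℕ) : d ≤ d*d := by
  rcases Nat.eq_zero_or_pos d with rfl | hd
  · simp
  · exact Nat.le_mul_of_pos_left d hd

lemma Aident : qp 2 4 ^ 2 * qp 2 2 = phip * qp 1 2 ^ 2 := by
  apply eq_of_MD_all
  intro N
  set n := 2*N with hn
  -- step 1 : the partial sum is close to (qp 2 2)⁻¹ * phip
  have hS : MD N (∑ k ∈ range (2*n+1), bb 2 (2*n) k * X^(w n k))
      (∑ k ∈ range (2*n+1), (qp 2 2)⁻¹ * X^(w n k)) := by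
    rw [MD, ← Finset.sum_sub_distrib]
    apply Finset.dvd_sum
    intro k hk
    simp only [Finset.mem_range] at hk
    rw [← sub_mul]
    by_cases hw : w n k < N
    · have hbound : N ≤ k ∧ N ≤ 2*n - k := by
        constructor
        · by_contra hcon
          have h1 : N + 1 ≤ n - k := by omega
          have h2 := le_sq (n-k)
          have : w n k ≥ (n-k)*(n-k) := Nat.le_add_right _ _
          omega
        · by_contra hcon
          have h1 : N + 1 ≤ k - n := by omega
          have h2 := le_sq (k-n)
          have : w n k ≥ (k-n)*(k-n) := Nat.le_add_left _ _
          omega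
      exact Dvd.dvd.mul_right (bb_approx (by norm_num) hbound.1 hbound.2 (by omega)) _
    · exact Dvd.dvd.mul_left (pow_dvd_pow _ (by omega)) _
  have hS2 : MD N (∑ k ∈ range (2*n+1), (qp 2 2)⁻¹ * X^(w n k)) ((qp 2 2)⁻¹ * phip) := by
    rw [← Finset.mul_sum, w_sum n]
    exact (MD.refl N _).mul (phip_approx (by omega)).symm
  have hfin : MD N ((∏ j ∈ range n, (1 + (X:A)^(1+2*j)))^2) ((qp 2 2)⁻¹ * phip) :=
    ((MD.of_eq (A_fin n)).trans hS).trans hS2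
  -- step 2 : multiply by qp22 * qp12^2
  have t12 : MD N (qp 1 2) (Pf 1 2 n) := MD_qp_Pf (by omega) (by omega) (by omega)
  have hpair : Pf 1 2 n * (∏ j ∈ range n, (1 + (X:A)^(1+2*j))) = Pf 2 4 n := by
    rw [Pf, mul_comm, pair_prod (fun i => 1 + 2*i) n]
    apply Finset.prod_congr rfl
    intro i _
    have e1 : 2*(1+2*i) = 2+4*i := by ring
    rw [e1]
  have t24 : MD N (qp 2 4) (Pf 2 4 n) := MD_qp_Pf (by omega) (by omega) (by omega)
  have t22 : MD N (qp 2 2) (qp 2 2) := MD.refl N _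
  -- assemble
  have main : MD N (qp 2 4 ^ 2 * qp 2 2)
      ((qp 1 2)^2 * ((∏ j ∈ range n, (1 + (X:A)^(1+2*j)))^2 * qp 2 2)) := by
    have s1 : MD N (qp 2 4 ^ 2 * qp 2 2) ((Pf 2 4 n)^2 * qp 2 2) :=
      (t24.pow 2).mul t22
    have s2 : ((Pf 2 4 n):A)^2 * qp 2 2
        = (Pf 1 2 n)^2 * ((∏ j ∈ range n, (1 + (X:A)^(1+2*j)))^2 * qp 2 2) := by
      rw [← hpair]
      ring
    have s3 : MD N ((Pf 1 2 n)^2 * ((∏ j ∈ range n, (1 + (X:A)^(1+2*j)))^2 * qp 2 2))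
        ((qp 1 2)^2 * ((∏ j ∈ range n, (1 + (X:A)^(1+2*j)))^2 * qp 2 2)) :=
      ((t12.symm).pow 2).mul (MD.refl N _)
    exact (s1.trans (MD.of_eq s2)).trans s3
  have main2 : MD N ((qp 1 2)^2 * ((∏ j ∈ range n, (1 + (X:A)^(1+2*j)))^2 * qp 2 2))
      ((qp 1 2)^2 * (((qp 2 2)⁻¹ * phip) * qp 2 2)) :=
    (MD.refl N _).mul (hfin.mul (MD.refl N _))
  have efin : (qp 1 2)^2 * (((qp 2 2)⁻¹ * phip) * qp 2 2) = phip * (qp 1 2)^2 := by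
    have h2 : qp 2 2 * (qp 2 2)⁻¹ = 1 := qp_mul_inv (by omega)
    calc (qp 1 2)^2 * (((qp 2 2)⁻¹ * phip) * qp 2 2)
        = (qp 2 2 * (qp 2 2)⁻¹) * (phip * (qp 1 2)^2) := by ring
    _ = phip * (qp 1 2)^2 := by rw [h2, one_mul]
  exact (main.trans main2).trans (MD.of_eq efin)

lemma Bident : psis * qp 1 1 = qp 2 2 ^ 2 := by
  apply eq_of_MD_all
  intro N
  rcases Nat.eq_zero_or_pos N with rfl | hN
  · simp [MD]
  set n := 2*N with hn
  have hn1 : 1 ≤ n := by omega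
  have hS : MD N (∑ k ∈ range (2*n+1), bb 1 (2*n) k * X^(v n k))
      (∑ k ∈ range (2*n+1), (qp 1 1)⁻¹ * X^(v n k)) := by
    rw [MD, ← Finset.sum_sub_distrib]
    apply Finset.dvd_sum
    intro k hk
    simp only [Finset.mem_range] at hk
    rw [← sub_mul]
    by_cases hv : v n k < N
    · have hbound : N ≤ k ∧ N ≤ 2*n - k := by
        constructor
        · by_contra hcon
          have h1 : v n k = sg 1 (n-k-1) := if_neg (by omega)
          have h2 := sg_le (n-k-1)
          omega
        · by_contra hcon
          have h1 : v n k = sg 1 (k-n) := if_pos (by omega)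
          have h2 := sg_le (k-n)
          omega
      exact Dvd.dvd.mul_right (bb_approx (by norm_num) hbound.1 hbound.2 (by omega)) _
    · exact Dvd.dvd.mul_left (pow_dvd_pow _ (by omega)) _
  have hS2 : MD N (∑ k ∈ range (2*n+1), (qp 1 1)⁻¹ * X^(v n k))
      ((qp 1 1)⁻¹ * (2 * psis)) := by
    rw [← Finset.mul_sum, v_sum n]
    apply (MD.refl N ((qp 1 1)⁻¹)).mul
    have c1 : MD N (2*∑ j ∈ range n, (X:A)^(sg 1 j)) (2*psis) :=
      (MD.refl N 2).mul (psis_approx (by omega)).symm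
    have c2 : MD N ((X:A)^(sg 1 n)) 0 := by
      rw [MD, sub_zero]
      apply pow_dvd_pow
      have := sg_le n
      omega
    have := c1.add c2
    rw [add_zero] at this
    exact this
  have hfin : MD N ((∏ j ∈ range n, (1 + (X:A)^j))
        * (∏ j ∈ range n, (1 + (X:A)^(1+1*j)))) ((qp 1 1)⁻¹ * (2 * psis)) :=
    ((MD.of_eq (B_fin n)).trans hS).trans hS2
  -- product expressions
  have hsplit : (∏ j ∈ range n, (1 + (X:A)^j))
      = 2 * ∏ j ∈ range (n-1), (1 + (X:A)^(1+1*j)) := by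
    have e : n = (n-1)+1 := by omega
    rw [e, Nat.add_sub_cancel, Finset.prod_range_succ']
    have e0 : (1 + (X:A)^0) = 2 := by norm_num
    have e1 : ∀ i ∈ range (n-1), (1 + (X:A)^(i+1)) = (1 + (X:A)^(1+1*i)) := by
      intro i _
      have h3 : i + 1 = 1 + 1*i := by omega
      rw [h3]
    rw [e0, Finset.prod_congr rfl e1]
    ring
  have hpair : ∀ M : ℕ, (∏ j ∈ range M, (1 + (X:A)^(1+1*j))) * Pf 1 1 M = Pf 2 2 M := by
    intro M
    rw [Pf, pair_prod (fun i => 1 + 1*i) M]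
    apply Finset.prod_congr rfl
    intro i _
    have e1 : 2*(1+1*i) = 2+2*i := by ring
    rw [e1]
  -- assemble : 2 * qp22^2 ≡ 2 * (psis * qp11)
  have t11a : MD N (qp 1 1) (Pf 1 1 (n-1)) := MD_qp_Pf (by omega) (by omega) (by omega)
  have t11b : MD N (qp 1 1) (Pf 1 1 n) := MD_qp_Pf (by omega) (by omega) (by omega)
  have t22a : MD N (qp 2 2) (Pf 2 2 (n-1)) := MD_qp_Pf (by omega) (by omega) (by omega)
  have t22b : MD N (qp 2 2) (Pf 2 2 n) := MD_qp_Pf (by omega) (by omega) (by omega)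
  have main : MD N (2 * qp 2 2 ^2)
      (((∏ j ∈ range n, (1 + (X:A)^j)) * (∏ j ∈ range n, (1 + (X:A)^(1+1*j))))
        * (qp 1 1 * qp 1 1)) := by
    have s1 : MD N (2 * qp 2 2^2) (2 * (Pf 2 2 (n-1) * Pf 2 2 n)) := by
      have := (MD.refl N 2).mul (t22a.mul t22b)
      have e : (2:A) * qp 2 2 ^2 = 2 * (qp 2 2 * qp 2 2) := by ring
      rw [e]
      exact this
    have s2 : (2:A) * (Pf 2 2 (n-1) * Pf 2 2 n)
        = ((2 * ∏ j ∈ range (n-1), (1 + (X:A)^(1+1*j)))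
            * (∏ j ∈ range n, (1 + (X:A)^(1+1*j)))) * (Pf 1 1 (n-1) * Pf 1 1 n) := by
      rw [← hpair (n-1), ← hpair n]
      ring
    have s3 : MD N (((2 * ∏ j ∈ range (n-1), (1 + (X:A)^(1+1*j)))
            * (∏ j ∈ range n, (1 + (X:A)^(1+1*j)))) * (Pf 1 1 (n-1) * Pf 1 1 n))
        (((∏ j ∈ range n, (1 + (X:A)^j)) * (∏ j ∈ range n, (1 + (X:A)^(1+1*j))))
          * (qp 1 1 * qp 1 1)) := by
      rw [hsplit]
      exact (MD.refl N _).mul ((t11a.symm).mul (t11b.symm))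
    exact (s1.trans (MD.of_eq s2)).trans s3
  have main2 : MD N (((∏ j ∈ range n, (1 + (X:A)^j)) * (∏ j ∈ range n, (1 + (X:A)^(1+1*j))))
        * (qp 1 1 * qp 1 1)) (((qp 1 1)⁻¹ * (2 * psis)) * (qp 1 1 * qp 1 1)) :=
    hfin.mul (MD.refl N _)
  have efin : ((qp 1 1)⁻¹ * (2 * psis)) * (qp 1 1 * qp 1 1) = (psis * qp 1 1) * 2 := by
    have h2 : qp 1 1 * (qp 1 1)⁻¹ = 1 := qp_mul_inv (by omega)
    calc ((qp 1 1)⁻¹ * (2 * psis)) * (qp 1 1 * qp 1 1)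
        = (qp 1 1 * (qp 1 1)⁻¹) * ((psis * qp 1 1) * 2) := by ring
    _ = (psis * qp 1 1) * 2 := by rw [h2, one_mul]
  have final : MD N ((qp 2 2^2) * 2) ((psis * qp 1 1) * 2) := by
    have := (main.trans main2).trans (MD.of_eq efin)
    have e : (2:A) * qp 2 2^2 = qp 2 2^2 * 2 := by ring
    rw [e] at this
    exact this
  exact (MD.cancel (u := 2) (by rw [map_ofNat]; norm_num) final).symm

/-! ### arithmetic identity: odd squares vs triangular numbers -/

lemma coeff_four_mul (m : ℕ) (f : A) : coeff m (4 * f) = 4 * coeff m f := by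
  have h2 : (4:A) = C 4 := by rw [map_ofNat]
  rw [h2, coeff_C_mul]

lemma coeff_sqh3 (j : ℕ) (f : A) :
    coeff j (sqh (sqh (sqh f))) = if 8 ∣ j then coeff (j/8) f else 0 := by
  rw [coeff_sqh, coeff_sqh, coeff_sqh]
  by_cases h8 : 8 ∣ j
  · rw [if_pos (by omega), if_pos (by omega), if_pos (by omega), if_pos h8]
    have e : j/2/2/2 = j/8 := by omega
    rw [e]
  · rw [if_neg h8]
    by_cases h2 : 2 ∣ j
    · rw [if_pos h2]
      by_cases h4 : 2 ∣ j/2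
      · rw [if_pos h4, if_neg (by omega)]
      · rw [if_neg h4]
    · rw [if_neg h2]

lemma C1 : phip - rescale (-1 : ℚ) phip = 4 * X * sqh (sqh (sqh psis)) := by
  ext m
  rw [map_sub, coeff_rescale, mul_assoc, coeff_four_mul, coeff_X_mul']
  cases m with
  | zero =>
      rw [if_pos rfl]
      norm_num
  | succ m =>
      rw [if_neg (by omega), coeff_sqh3]
      have e1 : m + 1 - 1 = m := by omega
      rw [e1]
      rcases Nat.even_or_odd m with ⟨j, hj⟩ | ⟨j, hj⟩
      · -- m even, m+1 odd
        have hodd : ¬ (2 ∣ (m+1)) := by omega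
        have hpow : (-1:ℚ)^(m+1) = -1 := by
          have e : m+1 = 2*j+1 := by omega
          rw [e, pow_succ, pow_mul]
          norm_num
        rw [hpow]
        have hphi : coeff (m+1) phip =
            if Nat.sqrt (m+1) * Nat.sqrt (m+1) = m+1 then 2 else 0 := by
          rw [phip, coeff_mk]
          split_ifs with h1 h2
          · exact h2.elim
          · rfl
          · rfl
        by_cases hsq : Nat.sqrt (m+1) * Nat.sqrt (m+1) = m+1
        · -- m+1 is an odd square, m = 8*T
          have hsq' : Nat.sqrt (m+1) * Nat.sqrt (m+1) = m+1 := hsq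
          obtain ⟨t, ht⟩ : ∃ t, Nat.sqrt (m+1) = t := ⟨_, rfl⟩
          rw [ht] at hsq'
          have htodd : ¬ (2 ∣ t) := by
            intro ⟨u, hu⟩
            rw [hu] at hsq'
            have hx : (2*u)*(2*u) = 2*(2*(u*u)) := by ring
            omega
          obtain ⟨i, hi⟩ : ∃ i, t = 2*i+1 := ⟨(t-1)/2, by omega⟩
          have h2' : (2*i+1)*(2*i+1) = m+1 := by rw [← hi]; exact hsq'
          have hexp : (2*i+1)*(2*i+1) = 4*(i*(i+1))+1 := by ring
          have h3 : 2 ∣ i*(i+1) := (Nat.even_mul_succ_self i).two_dvd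
          have h8d : 8 ∣ m := by omega
          rw [if_pos h8d, hphi, if_pos hsq]
          have hps : coeff (m/8) psis = 1 := by
            rw [psis, coeff_mk, if_pos]
            have e2 : 8*(m/8)+1 = m+1 := by omega
            rw [e2]
            exact hsq
          rw [hps]
          norm_num
        · rw [hphi, if_neg hsq]
          by_cases h8d : 8 ∣ m
          · rw [if_pos h8d]
            have hps : coeff (m/8) psis = 0 := by
              rw [psis, coeff_mk, if_neg]
              have e2 : 8*(m/8)+1 = m+1 := by omega
              rw [e2]
              exact hsq
            rw [hps]
            norm_num
          · rw [if_neg h8d]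
            norm_num
      · -- m odd, m+1 even
        have hpow : (-1:ℚ)^(m+1) = 1 := by
          have e : m+1 = 2*(j+1) := by omega
          rw [e, pow_mul]
          norm_num
        rw [hpow, if_neg (by omega), one_mul, sub_self]
        norm_num

/-! ### the Gauss identities in dissection form -/

lemma hq22 : sqh (qp 1 1) = qp 2 2 := by
  have h := sqh_qp (a := 1) (c := 1) (by norm_num) (by norm_num)
  norm_num at h
  exact h

lemma hq44 : sqh (qp 2 2) = qp 4 4 := by
  have h := sqh_qp (a := 2) (c := 2) (by norm_num) (by norm_num)
  norm_num at h
  exact h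

lemma hq88 : sqh (qp 4 4) = qp 8 8 := by
  have h := sqh_qp (a := 4) (c := 4) (by norm_num) (by norm_num)
  norm_num at h
  exact h

lemma hq24 : sqh (qp 1 2) = qp 2 4 := by
  have h := sqh_qp (a := 1) (c := 2) (by norm_num) (by norm_num)
  norm_num at h
  exact h

lemma hq11split : qp 1 1 = qp 1 2 * qp 2 2 := by
  have h := qp_split (a := 1) (c := 1) (by norm_num) (by norm_num)
  norm_num at h
  exact h

lemma r22 : rescale (-1:ℚ) (qp 2 2) = qp 2 2 :=
  r_qp_even ⟨1, rfl⟩ ⟨1, rfl⟩ (by norm_num) (by norm_num)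

lemma gauss2a : phip = (rescale (-1:ℚ) (qp 1 2))^2 * qp 2 2 := by
  have hA := Aident
  have hrg : rescale (-1:ℚ) (qp 1 2) * qp 1 2 = qp 2 4 := r_qp12_mul
  have hg : qp 1 2 ≠ 0 := qp_ne_zero (by norm_num)
  have key : phip * (qp 1 2)^2 = ((rescale (-1:ℚ) (qp 1 2))^2 * qp 2 2) * (qp 1 2)^2 := by
    rw [← hA, ← hrg]
    ring
  have := mul_right_cancel₀ (pow_ne_zero 2 hg) key
  exact this

lemma gauss2b : rescale (-1:ℚ) phip = (qp 1 2)^2 * qp 2 2 := by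
  have h := congrArg (rescale (-1:ℚ)) gauss2a
  rw [map_mul, map_pow, rescale_rescale_neg, r22] at h
  exact h

lemma gaussdiff : (rescale (-1:ℚ) (qp 1 2))^2 * qp 2 2 - (qp 1 2)^2 * qp 2 2
    = 4 * X * sqh (sqh (sqh psis)) := by
  rw [← gauss2a, ← gauss2b]
  exact C1

lemma b1 : sqh psis * qp 2 2 = qp 4 4^2 := by
  have h := congrArg sqh Bident
  rw [map_mul, map_pow, hq22, hq44] at h
  exact h

lemma b2 : sqh (sqh psis) * qp 4 4 = qp 8 8^2 := by
  have h := congrArg sqh b1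
  rw [map_mul, map_pow, hq44, hq88] at h
  exact h

/-! ### integrality over ℤ -/

def qpZ (a c : ℕ) : PowerSeries ℤ :=
  PowerSeries.mk fun n =>
    PowerSeries.coeff n
      (∏ i ∈ Finset.range (n + 1), (1 - (PowerSeries.X : PowerSeries ℤ) ^ (a + c * i)))

def mapQ : PowerSeries ℤ →+* A := PowerSeries.map (Int.castRingHom ℚ)

lemma mapQ_qpZ (a c : ℕ) : mapQ (qpZ a c) = qp a c := by
  ext n
  rw [mapQ, PowerSeries.coeff_map, qpZ, qp, coeff_mk, coeff_mk]
  have h : (∏ i ∈ Finset.range (n + 1), (1 - (X : A) ^ (a + c * i)))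
      = PowerSeries.map (Int.castRingHom ℚ)
          (∏ i ∈ Finset.range (n + 1), (1 - (X : PowerSeries ℤ) ^ (a + c*i))) := by
    rw [map_prod]
    apply Finset.prod_congr rfl
    intro i _
    rw [map_sub, map_one, map_pow, PowerSeries.map_X]
  rw [h, PowerSeries.coeff_map]

lemma constantCoeff_qpZ11 : constantCoeff (qpZ 1 1) = 1 := by
  rw [← coeff_zero_eq_constantCoeff, qpZ, coeff_mk, coeff_zero_eq_constantCoeff, map_prod]
  apply Finset.prod_eq_one
  intro i _
  rw [map_sub, map_one, map_pow, constantCoeff_X, zero_pow (by omega), sub_zero]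

lemma hX2ne : (2 * X : A) ≠ 0 := mul_ne_zero two_ne_zero' PowerSeries.X_ne_zero

end
end EOaux

open EOaux in
/-- `∑_{n≥0} EObar(8n+6) qⁿ = 4 (q²;q²)_∞ (q⁴;q⁴)_∞ (q⁸;q⁸)_∞² / (q;q)_∞³`;
in particular `EObar(8n+6) ≡ 0 (mod 4)` for all `n`. -/
theorem EObar_8n6_generating_function (EObar : ℕ → ℕ)
    (hEO : PowerSeries.mk (fun n => (EObar n : ℚ)) = qp 4 4 ^ 3 * (qp 2 2 ^ 2)⁻¹) :
    PowerSeries.mk (fun n => (EObar (8 * n + 6) : ℚ)) =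
      4 * qp 2 2 * qp 4 4 * qp 8 8 ^ 2 * (qp 1 1 ^ 3)⁻¹ ∧
    ∀ n : ℕ, 4 ∣ EObar (8 * n + 6) := by
  classical
  have hstep1 : PowerSeries.mk (fun n => (EObar n : ℚ)) * qp 2 2^2 = qp 4 4^3 := by
    rw [hEO]
    have hinv : (qp 2 2^2) * (qp 2 2^2)⁻¹ = 1 :=
      PowerSeries.mul_inv_cancel _
        (by rw [map_pow, constantCoeff_qp (by norm_num)]; norm_num)
    linear_combination (qp 4 4^3) * hinv
  set F := PowerSeries.mk (fun n => (EObar n : ℚ)) with hFdef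
  have hsq11 : sqh (qp 1 1^2) = qp 2 2^2 := by rw [map_pow, hq22]
  have hsq22 : sqh (qp 2 2^3) = qp 4 4^3 := by rw [map_pow, hq44]
  have hOF : Od F = 0 := by
    have h1 : Od (sqh (qp 1 1^2) * F) = qp 1 1^2 * Od F := Od_sqh_mul _ _
    rw [hsq11] at h1
    have h2 : qp 2 2^2 * F = qp 4 4^3 := by rw [mul_comm]; exact hstep1
    rw [h2, ← hsq22, Od_sqh] at h1
    have h3 : (qp 1 1^2 : PowerSeries ℚ) ≠ 0 := pow_ne_zero _ (qp_ne_zero (le_refl 1))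
    rcases mul_eq_zero.mp h1.symm with h | h
    · exact absurd h h3
    · exact h
  have hFsq : sqh (Ev F) = F := by
    have hd := decomp F
    rw [hOF, map_zero, mul_zero, add_zero] at hd
    exact hd.symm
  have hh : Ev F * qp 1 1^2 = qp 2 2^3 := by
    apply sqh_injective
    rw [map_mul, hFsq, hsq11, hsq22]
    exact hstep1
  have hrh : rescale (-1:ℚ) (Ev F) * (rescale (-1:ℚ) (qp 1 1))^2 = qp 2 2^3 := by
    have h1 := congrArg (rescale (-1:ℚ)) hh
    rwa [map_mul, map_pow, map_pow, r22] at h1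
  have hrq11 : rescale (-1:ℚ) (qp 1 1) = rescale (-1:ℚ) (qp 1 2) * qp 2 2 := by
    rw [hq11split, map_mul, r22]
  set g := qp 1 2 with hgdef
  set rg := rescale (-1:ℚ) (qp 1 2) with hrgdef
  have hgrg : rg * g = qp 2 4 := r_qp12_mul
  rw [hq11split] at hh
  rw [hrq11] at hrh
  -- hh : Ev F * (g * qp 2 2)^2 = qp 2 2^3
  -- hrh : rescale (-1) (Ev F) * (rg * qp 2 2)^2 = qp 2 2^3
  have hextract := od_extract (Ev F)
  have hstep7 : Od (Ev F) * g^2 = 2 * sqh (sqh psis) := by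
    have key : (2*X*sqh (Od (Ev F))) * (rg*g*qp 2 2^2)^2
        = qp 2 2^4 * (rg^2*qp 2 2 - g^2*qp 2 2) := by
      rw [hextract]
      linear_combination (rg^2*qp 2 2^2) * hh - (g^2 * qp 2 2^2) * hrh
    rw [gaussdiff] at key
    have key2 : (2*X) * (sqh (Od (Ev F)) * (rg*g*qp 2 2^2)^2)
        = (2*X) * (2 * qp 2 2^4 * sqh (sqh (sqh psis))) := by
      linear_combination key
    have key3 := mul_left_cancel₀ hX2ne key2
    have hW : rg*g*qp 2 2^2 = sqh (qp 1 2 * qp 1 1^2) := by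
      rw [hgrg, map_mul, map_pow, hq24, hq22]
    have key4 : sqh (Od (Ev F) * (qp 1 2 * qp 1 1^2)^2)
        = sqh (2 * qp 1 1^4 * sqh (sqh psis)) := by
      rw [map_mul, map_pow, ← hW]
      rw [map_mul, map_mul, map_pow, hq22, map_ofNat]
      exact key3
    have key5 := sqh_injective key4
    have h4 : (qp 1 1^4 : PowerSeries ℚ) ≠ 0 := pow_ne_zero _ (qp_ne_zero (le_refl 1))
    have e : (Od (Ev F) * g^2) * qp 1 1^4 = (2 * sqh (sqh psis)) * qp 1 1^4 := by
      linear_combination key5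
    exact mul_right_cancel₀ h4 e
  have hrt : rescale (-1:ℚ) (Od (Ev F)) * rg^2 = 2 * sqh (sqh psis) := by
    have h1 := congrArg (rescale (-1:ℚ)) hstep7
    rwa [map_mul, map_pow, map_mul, map_ofNat, rescale_sqh] at h1
  have hext2 := od_extract (Od (Ev F))
  have hstep10 : Od (Od (Ev F)) * (qp 1 1 * qp 1 2^2)
      = 4 * sqh psis * sqh (sqh psis) := by
    have key : (2*X*sqh (Od (Od (Ev F)))) * (qp 2 2 * (rg*g)^2)
        = 2 * sqh (sqh psis) * (4*X*sqh (sqh (sqh psis))) := by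
      rw [hext2]
      linear_combination (rg^2 * qp 2 2) * hstep7 - (g^2 * qp 2 2) * hrt
        + (2*sqh (sqh psis)) * gaussdiff
    have key2 : (2*X) * (sqh (Od (Od (Ev F))) * (qp 2 2 * (rg*g)^2))
        = (2*X) * (4 * sqh (sqh psis) * sqh (sqh (sqh psis))) := by
      linear_combination key
    have key3 := mul_left_cancel₀ hX2ne key2
    have hM : qp 2 2 * (rg*g)^2 = sqh (qp 1 1 * qp 1 2^2) := by
      rw [hgrg, map_mul, map_pow, hq22, hq24]
    have key4 : sqh (Od (Od (Ev F)) * (qp 1 1 * qp 1 2^2))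
        = sqh (4 * sqh psis * sqh (sqh psis)) := by
      rw [map_mul, ← hM]
      rw [map_mul, map_mul, map_ofNat]
      exact key3
    exact sqh_injective key4
  have hu3 : Od (Od (Ev F)) * qp 1 1^3 = 4*(qp 2 2 * qp 4 4 * qp 8 8^2) := by
    have e : (4 * sqh psis * sqh (sqh psis) * qp 2 2^2) * qp 4 4
        = (4*(qp 2 2*qp 4 4*qp 8 8^2)) * qp 4 4 := by
      linear_combination (4 * sqh (sqh psis) * qp 4 4 * qp 2 2) * b1
        + (4 * qp 4 4^2 * qp 2 2) * b2
    have e2 := mul_right_cancel₀ (qp_ne_zero (show (1:ℕ) ≤ 4 by norm_num)) e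
    have e3 : Od (Od (Ev F)) * qp 1 1^3
        = (Od (Od (Ev F)) * (qp 1 1 * qp 1 2^2)) * qp 2 2^2 := by
      rw [hq11split]
      ring
    rw [e3, hstep10]
    linear_combination e2
  have hmk : PowerSeries.mk (fun n => (EObar (8*n+6) : ℚ)) = Od (Od (Ev F)) := by
    ext n
    rw [coeff_mk, coeff_Od, coeff_Od, coeff_Ev, hFdef, coeff_mk]
    have e : 2*(2*(2*n+1)+1) = 8*n+6 := by ring
    rw [e]
  have hinv3 : qp 1 1^3 * (qp 1 1^3)⁻¹ = 1 :=
    PowerSeries.mul_inv_cancel _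
      (by rw [map_pow, constantCoeff_qp (le_refl 1)]; norm_num)
  constructor
  · rw [hmk]
    linear_combination (qp 1 1^3)⁻¹ * hu3 - Od (Od (Ev F)) * hinv3
  · intro n
    set GZ := qpZ 2 2 * qpZ 4 4 * qpZ 8 8^2 *
      PowerSeries.invOfUnit (qpZ 1 1^3) 1 with hGZdef
    have hint : qpZ 1 1^3 * PowerSeries.invOfUnit (qpZ 1 1^3) 1 = 1 :=
      PowerSeries.mul_invOfUnit _ 1
        (by rw [map_pow, constantCoeff_qpZ11]; rfl)
    have hZ : GZ * qpZ 1 1^3 = qpZ 2 2 * qpZ 4 4 * qpZ 8 8^2 := by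
      rw [hGZdef]
      linear_combination (qpZ 2 2 * qpZ 4 4 * qpZ 8 8^2) * hint
    have hmapq : mapQ GZ * qp 1 1^3 = qp 2 2 * qp 4 4 * qp 8 8^2 := by
      have h1 := congrArg mapQ hZ
      rw [hGZdef] at h1 ⊢
      simp only [map_mul, map_pow, mapQ_qpZ] at h1 ⊢
      linear_combination h1
    have hGu : Od (Od (Ev F)) = 4 * mapQ GZ := by
      have hdiff : (Od (Od (Ev F)) - 4 * mapQ GZ) * qp 1 1^3 = 0 := by
        linear_combination hu3 - (4:PowerSeries ℚ) * hmapq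
      rcases mul_eq_zero.mp hdiff with hcase | hcase
      · exact sub_eq_zero.mp hcase
      · exact absurd hcase (pow_ne_zero _ (qp_ne_zero (le_refl 1)))
    have h2 : coeff n (Od (Od (Ev F))) = (EObar (8*n+6) : ℚ) := by
      rw [← hmk, coeff_mk]
    have hco : (EObar (8*n+6) : ℚ) = 4 * ((PowerSeries.coeff n GZ : ℤ) : ℚ) := by
      have h1 := congrArg (coeff n) hGu
      rw [h2, coeff_four_mul, mapQ, PowerSeries.coeff_map, Int.coe_castRingHom] at h1
      exact h1
    have hz : (EObar (8*n+6) : ℤ) = 4 * PowerSeries.coeff n GZ := by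
      exact_mod_cast hco
    have hdvd : (4:ℤ) ∣ (EObar (8*n+6) : ℤ) := ⟨_, hz⟩
    exact_mod_cast hdvd
end

section
/- The congruence ∑_{n≥0} EO-bar(n) q^n ≡ (q^2;q^2)_∞^2 (q^4;q^4)_∞ (mod 4) holds, i.e., EO-bar(n) agrees modulo 4 with the n-th coefficient of (q^2;q^2)_∞^2 (q^4;q^4)_∞. -/
open PowerSeries

/-- integer version of `qp`. -/
noncomputable def zqp (a c : ℕ) : PowerSeries ℤ :=
  PowerSeries.mk fun n =>
    PowerSeries.coeff n
      (∏ i ∈ Finset.range (n + 1), (1 - (PowerSeries.X : PowerSeries ℤ) ^ (a + c * i)))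

lemma map_prod_one_sub_X_pow {R S : Type*} [CommRing R] [CommRing S] (f : R →+* S)
    (a c m : ℕ) :
    PowerSeries.map f (∏ i ∈ Finset.range m, (1 - (X : R⟦X⟧) ^ (a + c * i))) =
      ∏ i ∈ Finset.range m, (1 - (X : S⟦X⟧) ^ (a + c * i)) := by
  rw [map_prod]
  refine Finset.prod_congr rfl fun i _ => ?_
  simp

lemma map_zqp (a c : ℕ) : PowerSeries.map (Int.castRingHom ℚ) (zqp a c) = qp a c := by
  ext n
  rw [coeff_map, zqp, qp, coeff_mk, coeff_mk, ← coeff_map, map_prod_one_sub_X_pow]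

lemma coeff_prod_stable {R : Type*} [CommRing R] (a c : ℕ) (ha : 1 ≤ a) (hc : 1 ≤ c) (k m : ℕ)
    (hm : k + 1 ≤ m) :
    PowerSeries.coeff k (∏ i ∈ Finset.range m, (1 - (X : R⟦X⟧) ^ (a + c * i))) =
      PowerSeries.coeff k (∏ i ∈ Finset.range (k + 1), (1 - (X : R⟦X⟧) ^ (a + c * i))) := by
  induction m, hm using Nat.le_induction with
  | base => rfl
  | succ m hm ih =>
    rw [Finset.prod_range_succ, mul_sub, mul_one, map_sub, coeff_mul_X_pow', if_neg, sub_zero, ih]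
    have h1 : m ≤ c * m := Nat.le_mul_of_pos_left m (by omega)
    omega

lemma coeff_zqp (a c : ℕ) (ha : 1 ≤ a) (hc : 1 ≤ c) (n : ℕ) :
    ∀ k ≤ n, PowerSeries.coeff k (zqp a c) =
      PowerSeries.coeff k (∏ i ∈ Finset.range (n + 1), (1 - (X : ℤ⟦X⟧) ^ (a + c * i))) := by
  intro k hk
  rw [zqp, coeff_mk, coeff_prod_stable a c ha hc k (n + 1) (by omega)]

lemma agree_mul {R : Type*} [CommRing R] {n : ℕ} {f f' g g' : R⟦X⟧}
    (hf : ∀ k ≤ n, coeff k f = coeff k f') (hg : ∀ k ≤ n, coeff k g = coeff k g') :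
    ∀ k ≤ n, coeff k (f * g) = coeff k (f' * g') := by
  intro k hk
  rw [coeff_mul, coeff_mul]
  refine Finset.sum_congr rfl fun p hp => ?_
  replace hp : p.1 + p.2 = k := Finset.HasAntidiagonal.mem_antidiagonal.mp hp
  rw [hf p.1 (by omega), hg p.2 (by omega)]

lemma agree_pow {R : Type*} [CommRing R] {n : ℕ} {f f' : R⟦X⟧}
    (hf : ∀ k ≤ n, coeff k f = coeff k f') (j : ℕ) :
    ∀ k ≤ n, coeff k (f ^ j) = coeff k (f' ^ j) := by
  induction j with
  | zero => intro k hk; simp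
  | succ j ih =>
    intro k hk
    rw [pow_succ, pow_succ]
    exact agree_mul ih hf k hk

lemma four_eq_zero : (4 : (ZMod 4)⟦X⟧) = 0 := by
  rw [← map_ofNat ((PowerSeries.C (R := ZMod 4))) 4, show (4 : ZMod 4) = 0 by decide, map_zero]

lemma one_sub_pow_four (y : (ZMod 4)⟦X⟧) : (1 - y) ^ 4 = (1 - y ^ 2) ^ 2 := by
  linear_combination (-y + 2 * y ^ 2 - y ^ 3) * four_eq_zero

/-- key elementary congruence: `F^4 = G^2` over `ZMod 4`. -/
lemma prod_pow_four_eq (m : ℕ) :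
    (∏ i ∈ Finset.range m, (1 - (X : (ZMod 4)⟦X⟧) ^ (2 + 2 * i))) ^ 4 =
      (∏ i ∈ Finset.range m, (1 - (X : (ZMod 4)⟦X⟧) ^ (4 + 4 * i))) ^ 2 := by
  rw [← Finset.prod_pow, ← Finset.prod_pow]
  refine Finset.prod_congr rfl fun i _ => ?_
  have h : (X : (ZMod 4)⟦X⟧) ^ (4 + 4 * i) = ((X : (ZMod 4)⟦X⟧) ^ (2 + 2 * i)) ^ 2 := by
    rw [← pow_mul]; ring_nf
  rw [h, one_sub_pow_four]

lemma map_PS_injective : Function.Injective (PowerSeries.map (Int.castRingHom ℚ)) := by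
  intro f g h
  ext n
  have := congrArg (coeff n) h
  rw [coeff_map, coeff_map] at this
  exact Int.cast_injective this

/-- `∑_{n≥0} EObar(n) qⁿ ≡ (q²;q²)_∞² (q⁴;q⁴)_∞ (mod 4)`, coefficientwise. -/
theorem EObar_cong_mod_four (EObar : ℕ → ℕ)
    (hEO : PowerSeries.mk (fun n => (EObar n : ℚ)) = qp 4 4 ^ 3 * (qp 2 2 ^ 2)⁻¹) :
    ∀ n : ℕ, ∃ m : ℤ,
      (EObar n : ℚ) = PowerSeries.coeff n (qp 2 2 ^ 2 * qp 4 4) + 4 * m := by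
  intro n
  -- constant coefficients
  have hc22 : constantCoeff (qp 2 2) = 1 := by
    simp [qp, ← coeff_zero_eq_constantCoeff, coeff_mk, coeff_X_pow]
  have hc22' : constantCoeff (qp 2 2 ^ 2) ≠ 0 := by
    rw [map_pow, hc22]; norm_num
  have hQ : PowerSeries.mk (fun n => (EObar n : ℚ)) * qp 2 2 ^ 2 = qp 4 4 ^ 3 := by
    rw [hEO, mul_assoc, PowerSeries.inv_mul_cancel _ hc22', mul_one]
  -- integer level
  set E : ℤ⟦X⟧ := PowerSeries.mk fun n => (EObar n : ℤ) with hEdef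
  have hmapE : PowerSeries.map (Int.castRingHom ℚ) E = PowerSeries.mk fun n => (EObar n : ℚ) := by
    ext k; simp [coeff_map, hEdef, coeff_mk]
  have key : E * zqp 2 2 ^ 2 = zqp 4 4 ^ 3 := by
    apply map_PS_injective
    rw [map_mul, map_pow, map_pow, hmapE, map_zqp, map_zqp, hQ]
  have hcz : constantCoeff (zqp 2 2 ^ 2) = ((1 : ℤˣ) : ℤ) := by
    rw [map_pow]
    have : constantCoeff (zqp 2 2) = 1 := by
      simp [zqp, ← coeff_zero_eq_constantCoeff, coeff_mk, coeff_X_pow]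
    rw [this]; norm_num
  set V : ℤ⟦X⟧ := PowerSeries.invOfUnit (zqp 2 2 ^ 2) 1 with hVdef
  have hV : zqp 2 2 ^ 2 * V = 1 := PowerSeries.mul_invOfUnit _ _ hcz
  have hE : E - zqp 2 2 ^ 2 * zqp 4 4 = (zqp 4 4 ^ 3 - zqp 2 2 ^ 4 * zqp 4 4) * V := by
    linear_combination V * key + (zqp 2 2 ^ 2 * zqp 4 4 - E) * hV
  -- divisibility of coefficients of D
  have hdvd : ∀ k : ℕ, (4 : ℤ) ∣ coeff k (zqp 4 4 ^ 3 - zqp 2 2 ^ 4 * zqp 4 4) := by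
    intro k
    set F : ℤ⟦X⟧ := ∏ i ∈ Finset.range (k + 1), (1 - (X : ℤ⟦X⟧) ^ (2 + 2 * i)) with hF
    set G : ℤ⟦X⟧ := ∏ i ∈ Finset.range (k + 1), (1 - (X : ℤ⟦X⟧) ^ (4 + 4 * i)) with hG
    have h22 := coeff_zqp 2 2 (by norm_num) (by norm_num) k
    have h44 := coeff_zqp 4 4 (by norm_num) (by norm_num) k
    have hcoeff : coeff k (zqp 4 4 ^ 3 - zqp 2 2 ^ 4 * zqp 4 4) =
        coeff k (G ^ 3 - F ^ 4 * G) := by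
      rw [map_sub, map_sub, agree_pow h44 3 k le_rfl,
        agree_mul (agree_pow h22 4) h44 k le_rfl]
    rw [hcoeff]
    have hzero : PowerSeries.map (Int.castRingHom (ZMod 4)) (G ^ 3 - F ^ 4 * G) = 0 := by
      rw [map_sub, map_mul, map_pow, map_pow, hF, hG,
        map_prod_one_sub_X_pow, map_prod_one_sub_X_pow, prod_pow_four_eq]
      ring
    have := congrArg (coeff k) hzero
    rw [coeff_map, map_zero] at this
    exact_mod_cast (ZMod.intCast_zmod_eq_zero_iff_dvd _ 4).mp (by exact_mod_cast this)
  -- conclude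
  obtain ⟨m, hm⟩ := by
    have : (4 : ℤ) ∣ coeff n ((zqp 4 4 ^ 3 - zqp 2 2 ^ 4 * zqp 4 4) * V) := by
      rw [coeff_mul]
      exact Finset.dvd_sum fun p _ => (hdvd p.1).mul_right _
    exact this
  have hfin : coeff n E = coeff n (zqp 2 2 ^ 2 * zqp 4 4) + 4 * m := by
    have := congrArg (coeff n) hE
    rw [map_sub] at this
    omega
  refine ⟨m, ?_⟩
  have hcast : (coeff n) (qp 2 2 ^ 2 * qp 4 4) =
      ((coeff n (zqp 2 2 ^ 2 * zqp 4 4) : ℤ) : ℚ) := by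
    rw [← map_zqp, ← map_zqp, ← map_pow, ← map_mul, coeff_map]
    rfl
  have hEn : coeff n E = (EObar n : ℤ) := by simp [hEdef, coeff_mk]
  rw [hcast]
  rw [hEn] at hfin
  exact_mod_cast congrArg (Int.cast : ℤ → ℚ) hfin
end
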